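/- arXiv:1802.00080 — 7 statements merged into one kernel-verified Lean document; each statement's English description precedes it below -/
import Mathlib

section
/- Let U : ℝⁿ × ℝⁿ → ℝ be continuously differentiable and α_U-strongly concave in its first argument for every fixed second argument, with ∇_s U(s, z) uniformly ℓ_U-Lipschitz in z. For each x ∈ [0,1] let S(x) ⊆ ℝⁿ be nonempty, closed and convex, and define the best-response map (Bz)(x) = argmax_{s ∈ S(x)} U(s, z(x)). Then B is Lipschitz from L²([0,1]; ℝⁿ) to itself with constant ℓ_U/α_U: ‖Bf − Bg‖ ≤ (ℓ_U/α_U)·‖f − g‖ for all f, g ∈ L²([0,1]; ℝⁿ). -/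
open MeasureTheory Set Filter
open scoped RealInnerProductSpace Topology

open MeasureTheory Set Filter
open scoped RealInnerProductSpace Topology

variable {E : Type*} [NormedAddCommGroup E] [InnerProductSpace ℝ E] [CompleteSpace E]

/-- First-order upper bound for a strongly concave function on `univ`. -/
lemma strongConcaveOn_le_aux {h : E → ℝ} {α : ℝ} (hc : StrongConcaveOn Set.univ α h)
    {x y G : E} (hG : HasGradientAt h G x) :
    h y ≤ h x + ⟪G, y - x⟫ - α / 2 * ‖y - x‖ ^ 2 := by
  set ψ : ℝ → ℝ := fun t => h (x + t • (y - x)) with hψdef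
  have hd : HasDerivAt ψ ⟪G, y - x⟫ 0 := by
    have h1 : HasDerivAt (fun t : ℝ => x + t • (y - x)) (y - x) 0 := by
      simpa using ((hasDerivAt_id (0:ℝ)).smul_const (y - x)).const_add x
    have h0 : HasFDerivAt h ((InnerProductSpace.toDual ℝ E) G) (x + (0:ℝ) • (y - x)) := by
      simpa using hG.hasFDerivAt
    have h2 := h0.comp_hasDerivAt 0 h1
    have h3 : HasDerivAt (h ∘ fun t : ℝ => x + t • (y - x)) ⟪G, y - x⟫ 0 := by
      simpa [InnerProductSpace.toDual_apply_apply] using h2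
    exact h3
  have hslope : Tendsto (slope ψ 0) (𝓝[>] 0) (𝓝 ⟪G, y - x⟫) :=
    (hasDerivAt_iff_tendsto_slope.1 hd).mono_left
      (nhdsWithin_mono _ (fun t ht => ne_of_gt ht))
  have hRHS : Tendsto (fun t : ℝ => h y - h x + (1 - t) * (α / 2 * ‖x - y‖ ^ 2)) (𝓝[>] 0)
      (𝓝 (h y - h x + α / 2 * ‖x - y‖ ^ 2)) := by
    have hcont : Continuous fun t : ℝ => h y - h x + (1 - t) * (α / 2 * ‖x - y‖ ^ 2) := by
      continuity
    simpa using (hcont.tendsto 0).mono_left nhdsWithin_le_nhds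
  have key : h y - h x + α / 2 * ‖x - y‖ ^ 2 ≤ ⟪G, y - x⟫ := by
    refine le_of_tendsto_of_tendsto hRHS hslope ?_
    filter_upwards [Ioo_mem_nhdsGT_of_mem (by norm_num : (0:ℝ) ∈ Ico (0:ℝ) 1)] with t ht
    obtain ⟨ht0, ht1⟩ := ht
    have hc2 := hc.2 (mem_univ x) (mem_univ y)
      (by linarith : (0:ℝ) ≤ 1 - t) ht0.le (by ring)
    have hx' : (1 - t) • x + t • y = x + t • (y - x) := by
      rw [sub_smul, one_smul, smul_sub]; abel
    rw [hx'] at hc2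
    simp only [smul_eq_mul] at hc2
    have hψ0 : ψ 0 = h x := by simp [hψdef]
    have ht' : t * (h y - h x + (1 - t) * (α / 2 * ‖x - y‖ ^ 2)) ≤ ψ t - ψ 0 := by
      rw [hψ0]; show _ ≤ h (x + t • (y - x)) - h x; nlinarith [hc2]
    have hs : slope ψ 0 t = (ψ t - ψ 0) / t := by
      rw [slope_def_field]; field_simp; ring
    rw [hs, le_div_iff₀ ht0]
    linarith [ht']
  have hnorm : ‖x - y‖ = ‖y - x‖ := norm_sub_rev x y
  linarith [key, hnorm ▸ key]

/-- Strong monotonicity of the (negated) gradient of a strongly concave function. -/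
lemma strongConcaveOn_grad_mono {h : E → ℝ} {α : ℝ} (hc : StrongConcaveOn Set.univ α h)
    {x y Gx Gy : E} (hGx : HasGradientAt h Gx x) (hGy : HasGradientAt h Gy y) :
    α * ‖y - x‖ ^ 2 ≤ ⟪Gx - Gy, y - x⟫ := by
  have h1 := strongConcaveOn_le_aux hc hGx (y := y)
  have h2 := strongConcaveOn_le_aux hc hGy (y := x)
  have e1 : ⟪Gy, x - y⟫ = -⟪Gy, y - x⟫ := by
    rw [show x - y = -(y - x) by abel, inner_neg_right]
  have e2 : ⟪Gx - Gy, y - x⟫ = ⟪Gx, y - x⟫ - ⟪Gy, y - x⟫ := inner_sub_left _ _ _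
  have e3 : ‖x - y‖ = ‖y - x‖ := norm_sub_rev x y
  rw [e1, e3] at h2
  rw [e2]
  linarith

/-- Lipschitz continuity of the best-response operator: with `U` continuously
differentiable, `αU`-strongly concave in its first argument and with gradient
`ℓU`-Lipschitz in the second argument, and pointwise best responses over nonempty
closed convex sets `SS x`, the best-response map is `(ℓU/αU)`-Lipschitz on
`L²([0,1]; ℝⁿ)`. -/
theorem stmt_8 {n : ℕ}
    (U : EuclideanSpace ℝ (Fin n) → EuclideanSpace ℝ (Fin n) → ℝ)
    (αU ℓU : ℝ) (hα : 0 < αU) (hℓ : 0 ≤ ℓU)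
    (hU : ContDiff ℝ 1 (Function.uncurry U))
    (hconc : ∀ z, StrongConcaveOn Set.univ αU (fun s => U s z))
    (hgrad : ∀ s z₁ z₂,
      ‖gradient (fun s' => U s' z₁) s - gradient (fun s' => U s' z₂) s‖ ≤ ℓU * ‖z₁ - z₂‖)
    (SS : ℝ → Set (EuclideanSpace ℝ (Fin n)))
    (hSS : ∀ x, (SS x).Nonempty ∧ IsClosed (SS x) ∧ Convex ℝ (SS x))
    (f g Bf Bg : ℝ → EuclideanSpace ℝ (Fin n))
    (hBf : ∀ x, Bf x ∈ SS x ∧ IsMaxOn (fun s => U s (f x)) (SS x) (Bf x))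
    (hBg : ∀ x, Bg x ∈ SS x ∧ IsMaxOn (fun s => U s (g x)) (SS x) (Bg x))
    (hintfg : IntegrableOn (fun x => ‖f x - g x‖ ^ 2) (Set.Icc (0:ℝ) 1))
    (hmeasB : AEStronglyMeasurable (fun x => Bf x - Bg x)
      ((volume : Measure ℝ).restrict (Set.Icc (0:ℝ) 1))) :
    Real.sqrt (∫ x in Set.Icc (0:ℝ) 1, ‖Bf x - Bg x‖ ^ 2) ≤
      ℓU / αU * Real.sqrt (∫ x in Set.Icc (0:ℝ) 1, ‖f x - g x‖ ^ 2) := by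
  have hdiff : ∀ z, Differentiable ℝ (fun s => U s z) := fun z =>
    (hU.differentiable one_ne_zero).comp (differentiable_id.prodMk (differentiable_const z))
  -- first-order condition for maximizers
  have foc : ∀ (z : EuclideanSpace ℝ (Fin n)) (x : ℝ) (s y : EuclideanSpace ℝ (Fin n)),
      s ∈ SS x → y ∈ SS x → IsMaxOn (fun s' => U s' z) (SS x) s →
      ⟪gradient (fun s' => U s' z) s, y - s⟫ ≤ 0 := by
    intro z x s y hs hy hmax
    have hfd : HasFDerivWithinAt (fun s' => U s' z)
        ((InnerProductSpace.toDual ℝ _) (gradient (fun s' => U s' z) s)) (SS x) s :=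
      ((hdiff z s).hasGradientAt.hasFDerivAt).hasFDerivWithinAt
    have hcone : y - s ∈ posTangentConeAt (SS x) s :=
      sub_mem_posTangentConeAt_of_segment_subset ((hSS x).2.2.segment_subset hs hy)
    have := hmax.localize.hasFDerivWithinAt_nonpos hfd hcone
    simpa [InnerProductSpace.toDual_apply_apply] using this
  -- pointwise Lipschitz estimate
  have key : ∀ x, ‖Bf x - Bg x‖ ≤ ℓU / αU * ‖f x - g x‖ := by
    intro x
    set z₁ := f x; set z₂ := g x; set s₁ := Bf x; set s₂ := Bg x
    set G₁ := gradient (fun s' => U s' z₁) s₁ with hG₁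
    set G₂' := gradient (fun s' => U s' z₁) s₂ with hG₂'
    set G₂ := gradient (fun s' => U s' z₂) s₂ with hG₂
    have hmono : αU * ‖s₂ - s₁‖ ^ 2 ≤ ⟪G₁ - G₂', s₂ - s₁⟫ :=
      strongConcaveOn_grad_mono (hconc z₁) (hdiff z₁ s₁).hasGradientAt
        (hdiff z₁ s₂).hasGradientAt
    have foc1 : ⟪G₁, s₂ - s₁⟫ ≤ 0 :=
      foc z₁ x s₁ s₂ (hBf x).1 (hBg x).1 (hBf x).2
    have foc2 : ⟪G₂, s₁ - s₂⟫ ≤ 0 :=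
      foc z₂ x s₂ s₁ (hBg x).1 (hBf x).1 (hBg x).2
    have e1 : ⟪G₂, s₁ - s₂⟫ = -⟪G₂, s₂ - s₁⟫ := by
      rw [show s₁ - s₂ = -(s₂ - s₁) by abel, inner_neg_right]
    have e2 : ⟪G₁ - G₂', s₂ - s₁⟫ = ⟪G₁, s₂ - s₁⟫ + ⟪G₂ - G₂', s₂ - s₁⟫ - ⟪G₂, s₂ - s₁⟫ := by
      rw [inner_sub_left, inner_sub_left]; ring
    have cauchy : ⟪G₂ - G₂', s₂ - s₁⟫ ≤ ℓU * ‖z₂ - z₁‖ * ‖s₂ - s₁‖ := by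
      calc ⟪G₂ - G₂', s₂ - s₁⟫ ≤ ‖G₂ - G₂'‖ * ‖s₂ - s₁‖ :=
            real_inner_le_norm _ _
        _ ≤ ℓU * ‖z₂ - z₁‖ * ‖s₂ - s₁‖ := by
            have := hgrad s₂ z₂ z₁
            exact mul_le_mul_of_nonneg_right this (norm_nonneg _)
    have hmain : αU * ‖s₂ - s₁‖ ^ 2 ≤ ℓU * ‖z₂ - z₁‖ * ‖s₂ - s₁‖ := by
      rw [e1] at foc2; rw [e2] at hmono; linarith
    have hnrev : ‖s₁ - s₂‖ = ‖s₂ - s₁‖ := norm_sub_rev _ _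
    have hzrev : ‖z₁ - z₂‖ = ‖z₂ - z₁‖ := norm_sub_rev _ _
    rw [hnrev, hzrev]
    rcases eq_or_lt_of_le (norm_nonneg (s₂ - s₁)) with h0 | h0
    · rw [← h0]; positivity
    · rw [div_mul_eq_mul_div, le_div_iff₀ hα]
      nlinarith [hmain]
  -- integrate
  set C := ℓU / αU with hC
  have hC0 : 0 ≤ C := div_nonneg hℓ hα.le
  have hsq : ∀ x, ‖Bf x - Bg x‖ ^ 2 ≤ C ^ 2 * ‖f x - g x‖ ^ 2 := fun x => by
    nlinarith [key x, norm_nonneg (Bf x - Bg x), norm_nonneg (f x - g x),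
      mul_nonneg hC0 (norm_nonneg (f x - g x))]
  have hint2 : IntegrableOn (fun x => C ^ 2 * ‖f x - g x‖ ^ 2) (Set.Icc (0:ℝ) 1) :=
    hintfg.const_mul _
  have hmeas : AEStronglyMeasurable (fun x => ‖Bf x - Bg x‖ ^ 2)
      ((volume : Measure ℝ).restrict (Set.Icc (0:ℝ) 1)) := by
    exact hmeasB.norm.pow 2
  have hint1 : IntegrableOn (fun x => ‖Bf x - Bg x‖ ^ 2) (Set.Icc (0:ℝ) 1) := by
    refine Integrable.mono' hint2 hmeas (Filter.Eventually.of_forall fun x => ?_)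
    rw [Real.norm_eq_abs, abs_of_nonneg (by positivity)]
    exact hsq x
  have hIle : (∫ x in Set.Icc (0:ℝ) 1, ‖Bf x - Bg x‖ ^ 2) ≤
      ∫ x in Set.Icc (0:ℝ) 1, C ^ 2 * ‖f x - g x‖ ^ 2 :=
    integral_mono hint1 hint2 fun x => hsq x
  rw [integral_const_mul] at hIle
  calc Real.sqrt (∫ x in Set.Icc (0:ℝ) 1, ‖Bf x - Bg x‖ ^ 2)
      ≤ Real.sqrt (C ^ 2 * ∫ x in Set.Icc (0:ℝ) 1, ‖f x - g x‖ ^ 2) :=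
        Real.sqrt_le_sqrt hIle
    _ = C * Real.sqrt (∫ x in Set.Icc (0:ℝ) 1, ‖f x - g x‖ ^ 2) := by
        rw [Real.sqrt_mul (sq_nonneg C), Real.sqrt_sq hC0]
end

section
/- Comparative statics bound: let B be an (ℓ_U/α_U)-Lipschitz operator on L²([0,1];ℝⁿ), let 𝕎_n and 𝕎̃_n be bounded linear operators with ‖𝕎_n‖ = λ_max(𝕎) satisfying (ℓ_U/α_U)·λ_max(𝕎) < 1. If s̄ = B𝕎_n s̄ and s̃ = B𝕎̃_n s̃, then ‖s̄ − s̃‖ ≤ (ℓ_U/α_U)·‖s̃‖·‖𝕎_n − 𝕎̃_n‖ / (1 − (ℓ_U/α_U)·λ_max(𝕎)). -/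
set_option synthInstance.maxHeartbeats 400000


open MeasureTheory

/-- Lebesgue measure restricted to [0,1]. -/
noncomputable def mu01 : Measure ℝ := (volume : Measure ℝ).restrict (Set.Icc 0 1)

/-- Comparative statics bound: for an `(ℓU/αU)`-Lipschitz operator `B` on
`L²([0,1];ℝⁿ)` and bounded linear operators `Wn`, `Wtn` with `‖Wn‖ = λ_max(𝕎)`
satisfying `(ℓU/αU)·λ_max(𝕎) < 1`, if `s̄ = B(Wn s̄)` and `s̃ = B(Wtn s̃)`, then
`‖s̄ − s̃‖ ≤ (ℓU/αU)·‖s̃‖·‖Wn − Wtn‖ / (1 − (ℓU/αU)·λ_max(𝕎))`. -/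
theorem stmt_10 {n : ℕ} (ℓU αU lam : ℝ) (hα : 0 < αU) (hℓ : 0 ≤ ℓU)
    (B : Lp (EuclideanSpace ℝ (Fin n)) 2 mu01 → Lp (EuclideanSpace ℝ (Fin n)) 2 mu01)
    (Wn Wtn : Lp (EuclideanSpace ℝ (Fin n)) 2 mu01 →L[ℝ] Lp (EuclideanSpace ℝ (Fin n)) 2 mu01)
    (hB : ∀ u v, ‖B u - B v‖ ≤ ℓU / αU * ‖u - v‖)
    (hWn : ‖Wn‖ = lam)
    (hcond : ℓU / αU * lam < 1)
    (sb st : Lp (EuclideanSpace ℝ (Fin n)) 2 mu01)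
    (hsb : B (Wn sb) = sb) (hst : B (Wtn st) = st) :
    ‖sb - st‖ ≤ ℓU / αU * ‖st‖ * ‖Wn - Wtn‖ / (1 - ℓU / αU * lam) := by
  set k := ℓU / αU with hk
  have hk0 : 0 ≤ k := div_nonneg hℓ hα.le
  have key : ‖sb - st‖ ≤ k * lam * ‖sb - st‖ + k * ‖Wn - Wtn‖ * ‖st‖ := by
    calc ‖sb - st‖ = ‖B (Wn sb) - B (Wtn st)‖ := by rw [hsb, hst]
      _ ≤ k * ‖Wn sb - Wtn st‖ := hB _ _
      _ = k * ‖Wn (sb - st) + (Wn - Wtn) st‖ := by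
          congr 1
          simp [map_sub, ContinuousLinearMap.sub_apply]
      _ ≤ k * (‖Wn (sb - st)‖ + ‖(Wn - Wtn) st‖) := by
          exact mul_le_mul_of_nonneg_left (norm_add_le _ _) hk0
      _ ≤ k * (lam * ‖sb - st‖ + ‖Wn - Wtn‖ * ‖st‖) := by
          refine mul_le_mul_of_nonneg_left (add_le_add ?_ ?_) hk0
          · simpa [hWn] using Wn.le_opNorm (sb - st)
          · exact (Wn - Wtn).le_opNorm st
      _ = k * lam * ‖sb - st‖ + k * ‖Wn - Wtn‖ * ‖st‖ := by ring
  have hpos : 0 < 1 - k * lam := by linarith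
  rw [le_div_iff₀ hpos]
  nlinarith [key]
end

section
/- Linear quadratic graphon game with complements: suppose U(s,z) = −½s² + s(αz + β) with α > 0, β > 0, strategy sets S(x) = ℝ_{≥0}, and α·λ_max(𝕎) < 1 where 𝕎 is the graphon operator of W. Then the unique Nash equilibrium s̄ of the graphon game is strictly positive and is given by s̄ = β·(I − α𝕎)^{−1} 1, where 1 is the constant function equal to one; i.e., s̄ satisfies s̄(x) = α∫₀¹W(x,y)s̄(y)dy + β for a.e. x. -/
open MeasureTheory

lemma lq_prob : IsProbabilityMeasure (volume.restrict (Set.Icc (0:ℝ) 1)) :=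
  ⟨by rw [Measure.restrict_apply MeasurableSet.univ, Set.univ_inter, Real.volume_Icc]; norm_num⟩

lemma lq_bddInt {g : ℝ → ℝ} (hm : Measurable g) {C : ℝ}
    (hC : ∀ x ∈ Set.Icc (0:ℝ) 1, |g x| ≤ C) : IntegrableOn g (Set.Icc (0:ℝ) 1) := by
  haveI := lq_prob
  exact (integrable_const C).mono' hm.aestronglyMeasurable
    (ae_restrict_of_forall_mem measurableSet_Icc (by simpa using hC))

lemma lq_cs (g : ℝ → ℝ) (hint : IntegrableOn g (Set.Icc (0:ℝ) 1))
    (hint2 : IntegrableOn (fun x => g x ^ 2) (Set.Icc (0:ℝ) 1)) :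
    ∫ x in Set.Icc (0:ℝ) 1, |g x| ≤ Real.sqrt (∫ x in Set.Icc (0:ℝ) 1, g x ^ 2) := by
  haveI := lq_prob
  set μ := volume.restrict (Set.Icc (0:ℝ) 1) with hμ
  have hc0 : (0:ℝ) ≤ ∫ x, |g x| ∂μ := integral_nonneg fun x => abs_nonneg _
  set c := ∫ x, |g x| ∂μ with hc
  have habs : Integrable (fun x => |g x|) μ := hint.abs
  have hsq0 : 0 ≤ ∫ x, g x ^ 2 ∂μ := integral_nonneg fun x => sq_nonneg _
  rw [Real.le_sqrt hc0 hsq0]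
  have h0 : 0 ≤ ∫ x, (|g x| - c)^2 ∂μ := integral_nonneg fun x => sq_nonneg _
  have hexp : ∫ x, (|g x| - c)^2 ∂μ = (∫ x, g x ^2 ∂μ) - c^2 := by
    have h1 : ∀ x, (|g x| - c)^2 = g x ^2 - (2*c) * |g x| + c^2 := by
      intro x; rw [sub_sq, sq_abs]; ring
    have hA : Integrable (fun a => g a ^ 2 - 2 * c * |g a|) μ := hint2.sub (habs.const_mul (2*c))
    have hB : Integrable (fun _ : ℝ => c ^ 2) μ := integrable_const _
    rw [integral_congr_ae (Filter.Eventually.of_forall h1), integral_add hA hB,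
      integral_sub hint2 (habs.const_mul (2*c)), integral_const_mul, integral_const]
    simp [measure_univ]
    ring
  linarith [hexp ▸ h0]

lemma lq_intOfSq {s : ℝ → ℝ} (hm : Measurable s)
    (hint2 : IntegrableOn (fun x => s x ^ 2) (Set.Icc (0:ℝ) 1)) :
    IntegrableOn s (Set.Icc (0:ℝ) 1) := by
  haveI := lq_prob
  exact (((integrable_const (1:ℝ)).add hint2).div_const 2).mono' hm.aestronglyMeasurable
    (Filter.Eventually.of_forall fun x => by
      simp only [Pi.add_apply, Real.norm_eq_abs]; nlinarith [sq_nonneg (|s x| - 1), sq_abs (s x)])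

lemma lq_intW (W : ℝ → ℝ → ℝ) (hmeas : Measurable (Function.uncurry W))
    (hbd : ∀ x ∈ Set.Icc (0:ℝ) 1, ∀ y ∈ Set.Icc (0:ℝ) 1, W x y ∈ Set.Icc (0:ℝ) 1)
    {x : ℝ} (hx : x ∈ Set.Icc (0:ℝ) 1) {s : ℝ → ℝ} (hm : Measurable s)
    (hint : IntegrableOn s (Set.Icc (0:ℝ) 1)) :
    IntegrableOn (fun y => W x y * s y) (Set.Icc (0:ℝ) 1) := by
  refine hint.abs.mono' ((hmeas.comp (measurable_prodMk_left)).mul hm).aestronglyMeasurable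
    (ae_restrict_of_forall_mem measurableSet_Icc fun y hy => ?_)
  rw [Real.norm_eq_abs, abs_mul]
  have h := hbd x hx y hy
  calc |W x y| * |s y| ≤ 1 * |s y| := by
        apply mul_le_mul_of_nonneg_right _ (abs_nonneg _)
        rw [abs_le]; constructor <;> linarith [h.1, h.2]
    _ = |s y| := one_mul _

/-- A Nash equilibrium of the scalar linear quadratic graphon game with payoff
`U(s,z) = −½s² + s(αz + β)` and strategy sets `ℝ_{≥0}`: a square-integrable
measurable `s` with `s(x) = max{0, α ∫₀¹ W(x,y)s(y)dy + β}` on `[0,1]`. -/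
def IsLQGraphonNash (W : ℝ → ℝ → ℝ) (α β : ℝ) (s : ℝ → ℝ) : Prop :=
  Measurable s ∧ IntegrableOn (fun x => s x ^ 2) (Set.Icc (0:ℝ) 1) ∧
    ∀ x ∈ Set.Icc (0:ℝ) 1,
      s x = max 0 (α * (∫ y in Set.Icc (0:ℝ) 1, W x y * s y) + β)

lemma lq_char (W : ℝ → ℝ → ℝ) (hmeas : Measurable (Function.uncurry W))
    (hbd : ∀ x ∈ Set.Icc (0:ℝ) 1, ∀ y ∈ Set.Icc (0:ℝ) 1, W x y ∈ Set.Icc (0:ℝ) 1)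
    (α β : ℝ) (hα : 0 < α) (hβ : 0 < β) (s : ℝ → ℝ) (hs : IsLQGraphonNash W α β s) :
    ∀ x ∈ Set.Icc (0:ℝ) 1, 0 < s x ∧
      s x = α * (∫ y in Set.Icc (0:ℝ) 1, W x y * s y) + β := by
  obtain ⟨hm, hsq, heq⟩ := hs
  have snn : ∀ y ∈ Set.Icc (0:ℝ) 1, 0 ≤ s y := fun y hy => (heq y hy) ▸ le_max_left _ _
  intro x hx
  have hZnn : 0 ≤ ∫ y in Set.Icc (0:ℝ) 1, W x y * s y :=
    setIntegral_nonneg measurableSet_Icc fun y hy =>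
      mul_nonneg (hbd x hx y hy).1 (snn y hy)
  have hpos : 0 < α * (∫ y in Set.Icc (0:ℝ) 1, W x y * s y) + β := by positivity
  refine ⟨?_, ?_⟩
  · rw [heq x hx, max_eq_right hpos.le]; exact hpos
  · rw [heq x hx, max_eq_right hpos.le]

lemma lq_uniq (W : ℝ → ℝ → ℝ) (hmeas : Measurable (Function.uncurry W))
    (hbd : ∀ x ∈ Set.Icc (0:ℝ) 1, ∀ y ∈ Set.Icc (0:ℝ) 1, W x y ∈ Set.Icc (0:ℝ) 1)
    (α β lam : ℝ) (hα : 0 < α) (hβ : 0 < β) (hlam : 0 ≤ lam)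
    (hop : ∀ f : ℝ → ℝ, Measurable f →
      IntegrableOn (fun x => f x ^ 2) (Set.Icc (0:ℝ) 1) →
      ∫ x in Set.Icc (0:ℝ) 1, (∫ y in Set.Icc (0:ℝ) 1, W x y * f y) ^ 2 ≤
        lam ^ 2 * ∫ x in Set.Icc (0:ℝ) 1, f x ^ 2)
    (hcond : α * lam < 1) (s t : ℝ → ℝ)
    (hs : IsLQGraphonNash W α β s) (ht : IsLQGraphonNash W α β t) :
    ∀ x ∈ Set.Icc (0:ℝ) 1, s x = t x := by
  set d : ℝ → ℝ := fun x => s x - t x with hd_def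
  have hd_meas : Measurable d := hs.1.sub ht.1
  have hd_sq : IntegrableOn (fun x => d x ^ 2) (Set.Icc (0:ℝ) 1) := by
    haveI := lq_prob
    refine (((hs.2.1.const_mul 2)).add ((ht.2.1.const_mul 2))).mono'
      ((hd_meas.pow_const 2).aestronglyMeasurable) (Filter.Eventually.of_forall fun x => ?_)
    simp only [Pi.add_apply, Real.norm_eq_abs, abs_pow, hd_def]
    nlinarith [sq_nonneg (s x + t x), sq_abs (s x - t x), sq_nonneg (s x - t x)]
  have hd_int : IntegrableOn d (Set.Icc (0:ℝ) 1) := lq_intOfSq hd_meas hd_sq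
  have hs_int : IntegrableOn s (Set.Icc (0:ℝ) 1) := lq_intOfSq hs.1 hs.2.1
  have ht_int : IntegrableOn t (Set.Icc (0:ℝ) 1) := lq_intOfSq ht.1 ht.2.1
  have hlin : ∀ x ∈ Set.Icc (0:ℝ) 1,
      d x = α * ∫ y in Set.Icc (0:ℝ) 1, W x y * d y := by
    intro x hx
    have h1 := (lq_char W hmeas hbd α β hα hβ s hs x hx).2
    have h2 := (lq_char W hmeas hbd α β hα hβ t ht x hx).2
    calc d x = (α * (∫ y in Set.Icc (0:ℝ) 1, W x y * s y) + β)
          - (α * (∫ y in Set.Icc (0:ℝ) 1, W x y * t y) + β) := by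
          rw [hd_def]; rw [← h1, ← h2]
      _ = α * ((∫ y in Set.Icc (0:ℝ) 1, W x y * s y)
          - ∫ y in Set.Icc (0:ℝ) 1, W x y * t y) := by ring
      _ = α * ∫ y in Set.Icc (0:ℝ) 1, (W x y * s y - W x y * t y) := by
          rw [integral_sub (lq_intW W hmeas hbd hx hs.1 hs_int)
            (lq_intW W hmeas hbd hx ht.1 ht_int)]
      _ = α * ∫ y in Set.Icc (0:ℝ) 1, W x y * d y := by
          congr 1
          exact integral_congr_ae (Filter.Eventually.of_forall fun y =>
            (mul_sub (W x y) (s y) (t y)).symm)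
  have hzero : ∫ x in Set.Icc (0:ℝ) 1, d x ^ 2 = 0 := by
    have hB := hop d hd_meas hd_sq
    have e1 : ∫ x in Set.Icc (0:ℝ) 1, d x ^ 2
        = α ^ 2 * ∫ x in Set.Icc (0:ℝ) 1, (∫ y in Set.Icc (0:ℝ) 1, W x y * d y) ^ 2 := by
      rw [← integral_const_mul]
      exact setIntegral_congr_fun measurableSet_Icc fun x hx => by rw [hlin x hx]; ring
    have hnn : 0 ≤ ∫ x in Set.Icc (0:ℝ) 1, d x ^ 2 :=
      integral_nonneg fun x => sq_nonneg _
    have hq0 : (0:ℝ) ≤ α * lam := by positivity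
    have h1 : (α * lam) ^ 2 < 1 := by nlinarith
    have step : (∫ x in Set.Icc (0:ℝ) 1, d x ^ 2)
        ≤ (α * lam) ^ 2 * ∫ x in Set.Icc (0:ℝ) 1, d x ^ 2 := by
      calc (∫ x in Set.Icc (0:ℝ) 1, d x ^ 2)
          = α ^ 2 * ∫ x in Set.Icc (0:ℝ) 1, (∫ y in Set.Icc (0:ℝ) 1, W x y * d y) ^ 2 := e1
        _ ≤ α ^ 2 * (lam ^ 2 * ∫ x in Set.Icc (0:ℝ) 1, d x ^ 2) :=
            mul_le_mul_of_nonneg_left hB (by positivity)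
        _ = (α * lam) ^ 2 * ∫ x in Set.Icc (0:ℝ) 1, d x ^ 2 := by ring
    nlinarith [step, hnn, h1]
  have hae : ∀ᵐ y ∂(volume.restrict (Set.Icc (0:ℝ) 1)), d y = 0 := by
    have := (integral_eq_zero_iff_of_nonneg (fun x => sq_nonneg (d x)) hd_sq).mp hzero
    filter_upwards [this] with y hy
    exact pow_eq_zero_iff (n := 2) (by norm_num) |>.mp hy
  intro x hx
  have : (∫ y in Set.Icc (0:ℝ) 1, W x y * d y) = 0 := by
    rw [integral_congr_ae (g := fun _ => (0:ℝ))
      (by filter_upwards [hae] with y hy; rw [hy, mul_zero]), integral_zero]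
  have hdx := hlin x hx
  rw [this, mul_zero] at hdx
  have : s x - t x = 0 := hdx
  linarith

open Filter in
lemma lq_exists (W : ℝ → ℝ → ℝ) (hmeas : Measurable (Function.uncurry W))
    (hbd : ∀ x ∈ Set.Icc (0:ℝ) 1, ∀ y ∈ Set.Icc (0:ℝ) 1, W x y ∈ Set.Icc (0:ℝ) 1)
    (α β lam : ℝ) (hα : 0 < α) (hβ : 0 < β) (hlam : 0 ≤ lam)
    (hop : ∀ f : ℝ → ℝ, Measurable f →
      IntegrableOn (fun x => f x ^ 2) (Set.Icc (0:ℝ) 1) →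
      ∫ x in Set.Icc (0:ℝ) 1, (∫ y in Set.Icc (0:ℝ) 1, W x y * f y) ^ 2 ≤
        lam ^ 2 * ∫ x in Set.Icc (0:ℝ) 1, f x ^ 2)
    (hcond : α * lam < 1) : ∃ s : ℝ → ℝ, IsLQGraphonNash W α β s := by
  haveI := lq_prob
  set q := α * lam with hq_def
  have hq0 : 0 ≤ q := by positivity
  have hq1 : q < 1 := hcond
  set T : (ℝ → ℝ) → ℝ → ℝ := fun f x =>
    if x ∈ Set.Icc (0:ℝ) 1 then α * (∫ y in Set.Icc (0:ℝ) 1, W x y * f y) + β else 0 with hT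
  set f : ℕ → ℝ → ℝ := fun k => T^[k] (fun _ => 0) with hf
  have hf0 : f 0 = fun _ => 0 := rfl
  have hfs : ∀ k, f (k+1) = T (f k) := fun k => Function.iterate_succ_apply' T k _
  have hWg_meas : ∀ (g : ℝ → ℝ), Measurable g → ∀ x : ℝ, Measurable (fun y => W x y * g y) :=
    fun g hg x => (hmeas.comp measurable_prodMk_left).mul hg
  have hint_meas : ∀ (g : ℝ → ℝ), Measurable g →
      Measurable (fun x => ∫ y in Set.Icc (0:ℝ) 1, W x y * g y) := fun g hg =>
    (StronglyMeasurable.integral_prod_right'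
      (f := fun p : ℝ × ℝ => W p.1 p.2 * g p.2)
      ((hmeas.mul (hg.comp measurable_snd)).stronglyMeasurable)).measurable
  have hT_meas : ∀ g : ℝ → ℝ, Measurable g → Measurable (T g) := fun g hg =>
    Measurable.ite measurableSet_Icc
      ((measurable_const.mul (hint_meas g hg)).add measurable_const) measurable_const
  have hf_meas : ∀ k, Measurable (f k) := by
    intro k; induction k with
    | zero => exact measurable_const
    | succ k ih => rw [hfs k]; exact hT_meas _ ih
  have habsW : ∀ x ∈ Set.Icc (0:ℝ) 1, ∀ y ∈ Set.Icc (0:ℝ) 1, |W x y| ≤ 1 := by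
    intro x hx y hy
    have h := hbd x hx y hy
    rw [abs_le]; exact ⟨by linarith [h.1], h.2⟩
  have hbdd : ∀ k, ∃ C, 0 ≤ C ∧ ∀ y, |f k y| ≤ C := by
    intro k; induction k with
    | zero => exact ⟨0, le_refl 0, fun y => by rw [hf0]; simp⟩
    | succ k ih =>
      obtain ⟨C, hC0, hC⟩ := ih
      refine ⟨α * C + β, by positivity, fun x => ?_⟩
      rw [hfs k]
      by_cases hx : x ∈ Set.Icc (0:ℝ) 1
      · rw [hT]; simp only [if_pos hx]
        have h1 : |∫ y in Set.Icc (0:ℝ) 1, W x y * f k y| ≤ C := by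
          calc |∫ y in Set.Icc (0:ℝ) 1, W x y * f k y|
              ≤ ∫ y in Set.Icc (0:ℝ) 1, |W x y * f k y| := by
                simpa only [Real.norm_eq_abs] using
                  norm_integral_le_integral_norm (μ := volume.restrict (Set.Icc (0:ℝ) 1))
                    (fun y => W x y * f k y)
            _ ≤ ∫ _y in Set.Icc (0:ℝ) 1, C := by
                refine integral_mono_of_nonneg (Filter.Eventually.of_forall fun y => abs_nonneg _)
                  (integrable_const C) (ae_restrict_of_forall_mem measurableSet_Icc fun y hy => ?_)
                show |W x y * f k y| ≤ C
                rw [abs_mul]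
                calc |W x y| * |f k y| ≤ 1 * C :=
                      mul_le_mul (habsW x hx y hy) (hC y) (abs_nonneg _) zero_le_one
                  _ = C := one_mul C
            _ = C := by simp [measure_univ]
        calc |α * (∫ y in Set.Icc (0:ℝ) 1, W x y * f k y) + β|
            ≤ |α * ∫ y in Set.Icc (0:ℝ) 1, W x y * f k y| + |β| := abs_add_le _ _
          _ ≤ α * C + β := by
              rw [abs_mul, abs_of_pos hα, abs_of_pos hβ]
              have := mul_le_mul_of_nonneg_left h1 hα.le
              linarith
      · rw [hT]; simp only [if_neg hx]; rw [abs_zero]; positivity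
  have hIntOn : ∀ k, ∀ x ∈ Set.Icc (0:ℝ) 1,
      IntegrableOn (fun y => W x y * f k y) (Set.Icc (0:ℝ) 1) := by
    intro k x hx
    obtain ⟨C, hC0, hC⟩ := hbdd k
    exact lq_intW W hmeas hbd hx (hf_meas k) (lq_bddInt (hf_meas k) fun y _ => hC y)
  set g : ℕ → ℝ → ℝ := fun k x => f (k+1) x - f k x with hg_def
  have hg_meas : ∀ k, Measurable (g k) := fun k => (hf_meas (k+1)).sub (hf_meas k)
  have hg0 : ∀ x, g 0 x = if x ∈ Set.Icc (0:ℝ) 1 then β else 0 := by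
    intro x
    show f 1 x - f 0 x = _
    rw [hfs 0, hf0, hT]
    simp only [mul_zero, integral_zero]
    split_ifs <;> simp
  have hval : ∀ j x, x ∈ Set.Icc (0:ℝ) 1 →
      f (j+1) x = α * (∫ y in Set.Icc (0:ℝ) 1, W x y * f j y) + β := by
    intro j x hx
    rw [hfs j, hT]; simp only [if_pos hx]
  have hval0 : ∀ j x, x ∉ Set.Icc (0:ℝ) 1 → f (j+1) x = 0 := by
    intro j x hx
    rw [hfs j, hT]; simp only [if_neg hx]
  have hrec : ∀ k x, g (k+1) x =
      if x ∈ Set.Icc (0:ℝ) 1 then α * ∫ y in Set.Icc (0:ℝ) 1, W x y * g k y else 0 := by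
    intro k x
    show f (k+2) x - f (k+1) x = _
    by_cases hx : x ∈ Set.Icc (0:ℝ) 1
    · rw [if_pos hx, hval (k+1) x hx, hval k x hx]
      have e : (∫ y in Set.Icc (0:ℝ) 1, W x y * f (k+1) y)
          - (∫ y in Set.Icc (0:ℝ) 1, W x y * f k y)
          = ∫ y in Set.Icc (0:ℝ) 1, W x y * g k y := by
        rw [← integral_sub (hIntOn (k+1) x hx) (hIntOn k x hx)]
        exact integral_congr_ae (Filter.Eventually.of_forall fun y =>
          (mul_sub (W x y) (f (k+1) y) (f k y)).symm)
      rw [← e]; ring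
    · rw [if_neg hx, hval0 (k+1) x hx, hval0 k x hx]; ring
  have hg_nonneg : ∀ k x, 0 ≤ g k x := by
    intro k; induction k with
    | zero => intro x; rw [hg0 x]; split_ifs; exacts [hβ.le, le_refl 0]
    | succ k ih =>
      intro x; rw [hrec k x]; split_ifs with hx
      · exact mul_nonneg hα.le (setIntegral_nonneg measurableSet_Icc fun y hy =>
          mul_nonneg (hbd x hx y hy).1 (ih y))
      · exact le_refl 0
  have hg_bdd : ∀ k, ∃ C, 0 ≤ C ∧ ∀ x, |g k x| ≤ C := by
    intro k
    obtain ⟨C1, h10, h1⟩ := hbdd (k+1)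
    obtain ⟨C2, h20, h2⟩ := hbdd k
    exact ⟨C1 + C2, by linarith, fun x => (abs_sub (f (k+1) x) (f k x)).trans
      (add_le_add (h1 x) (h2 x))⟩
  have hg_int : ∀ k, IntegrableOn (g k) (Set.Icc (0:ℝ) 1) := by
    intro k; obtain ⟨C, hC0, hC⟩ := hg_bdd k
    exact lq_bddInt (hg_meas k) fun x _ => hC x
  have hg_sq : ∀ k, IntegrableOn (fun x => g k x ^ 2) (Set.Icc (0:ℝ) 1) := by
    intro k; obtain ⟨C, hC0, hC⟩ := hg_bdd k
    refine lq_bddInt ((hg_meas k).pow_const 2) (C := C ^ 2) fun x _ => ?_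
    rw [abs_pow]
    exact pow_le_pow_left₀ (abs_nonneg _) (hC x) 2
  set B : ℕ → ℝ := fun k => ∫ x in Set.Icc (0:ℝ) 1, g k x ^ 2 with hB_def
  have hB_nn : ∀ k, 0 ≤ B k := fun k => integral_nonneg fun x => sq_nonneg _
  have hB0 : B 0 ≤ β ^ 2 := by
    have : B 0 = ∫ _x in Set.Icc (0:ℝ) 1, β ^ 2 :=
      setIntegral_congr_fun measurableSet_Icc fun x hx => by rw [hg0 x, if_pos hx]
    rw [this]; simp [measure_univ]
  have hB_rec : ∀ k, B (k+1) ≤ q ^ 2 * B k := by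
    intro k
    have e : B (k+1) = α ^ 2 * ∫ x in Set.Icc (0:ℝ) 1,
        (∫ y in Set.Icc (0:ℝ) 1, W x y * g k y) ^ 2 := by
      rw [hB_def, ← integral_const_mul]
      exact setIntegral_congr_fun measurableSet_Icc fun x hx => by
        rw [hrec k x, if_pos hx]; ring
    calc B (k+1) = _ := e
      _ ≤ α ^ 2 * (lam ^ 2 * B k) :=
          mul_le_mul_of_nonneg_left (hop (g k) (hg_meas k) (hg_sq k)) (by positivity)
      _ = q ^ 2 * B k := by rw [hq_def]; ring
  have hB_le : ∀ k, B k ≤ β ^ 2 * (q ^ 2) ^ k := by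
    intro k; induction k with
    | zero => simpa using hB0
    | succ k ih =>
      calc B (k+1) ≤ q ^ 2 * B k := hB_rec k
        _ ≤ q ^ 2 * (β ^ 2 * (q ^ 2) ^ k) := mul_le_mul_of_nonneg_left ih (sq_nonneg q)
        _ = β ^ 2 * (q ^ 2) ^ (k+1) := by ring
  have hsqrtB : ∀ k, Real.sqrt (B k) ≤ β * q ^ k := by
    intro k
    have h : B k ≤ (β * q ^ k) ^ 2 := by
      calc B k ≤ β ^ 2 * (q ^ 2) ^ k := hB_le k
        _ = (β * q ^ k) ^ 2 := by ring
    calc Real.sqrt (B k) ≤ Real.sqrt ((β * q ^ k) ^ 2) := Real.sqrt_le_sqrt h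
      _ = β * q ^ k := Real.sqrt_sq (by positivity)
  have hgpt : ∀ k x, |g (k+1) x| ≤ α * (β * q ^ k) := by
    intro k x
    rw [hrec k x]
    split_ifs with hx
    · rw [abs_mul, abs_of_pos hα]
      refine mul_le_mul_of_nonneg_left ?_ hα.le
      have hWgint : IntegrableOn (fun y => W x y * g k y) (Set.Icc (0:ℝ) 1) :=
        lq_intW W hmeas hbd hx (hg_meas k) (hg_int k)
      calc |∫ y in Set.Icc (0:ℝ) 1, W x y * g k y|
          ≤ ∫ y in Set.Icc (0:ℝ) 1, |W x y * g k y| := by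
            simpa only [Real.norm_eq_abs] using
              norm_integral_le_integral_norm (μ := volume.restrict (Set.Icc (0:ℝ) 1))
                (fun y => W x y * g k y)
        _ ≤ ∫ y in Set.Icc (0:ℝ) 1, |g k y| := by
            refine setIntegral_mono_on hWgint.abs (hg_int k).abs measurableSet_Icc
              fun y hy => ?_
            rw [abs_mul]
            calc |W x y| * |g k y| ≤ 1 * |g k y| :=
                  mul_le_mul_of_nonneg_right (habsW x hx y hy) (abs_nonneg _)
              _ = |g k y| := one_mul _
        _ ≤ Real.sqrt (B k) := lq_cs (g k) (hg_int k) (hg_sq k)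
        _ ≤ β * q ^ k := hsqrtB k
    · rw [abs_zero]; positivity
  set c : ℕ → ℝ := fun k => Nat.rec β (fun k _ => α * (β * q ^ k)) k with hc_def
  have hc0 : c 0 = β := rfl
  have hcs : ∀ k, c (k+1) = α * (β * q ^ k) := fun k => rfl
  have hc_nn : ∀ k, 0 ≤ c k := by
    intro k; cases k with
    | zero => rw [hc0]; exact hβ.le
    | succ k => rw [hcs]; positivity
  have hgc : ∀ k x, |g k x| ≤ c k := by
    intro k x; cases k with
    | zero =>
      rw [hc0, hg0 x]; split_ifs
      · rw [abs_of_pos hβ]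
      · rw [abs_zero]; exact hβ.le
    | succ k => rw [hcs]; exact hgpt k x
  have hc_sum : Summable c := by
    rw [← summable_nat_add_iff 1]
    have e : (fun n => c (n + 1)) = fun n => (α * β) * q ^ n :=
      funext fun n => by rw [hcs]; ring
    rw [e]
    exact (summable_geometric_of_lt_one hq0 hq1).mul_left (α * β)
  have hgabs_sum : ∀ x, Summable (fun k => |g k x|) := fun x =>
    hc_sum.of_nonneg_of_le (fun k => abs_nonneg _) (fun k => hgc k x)
  have hgsum : ∀ x, Summable (fun k => g k x) := fun x => (hgabs_sum x).of_abs
  set s : ℝ → ℝ := fun x => ∑' k, g k x with hs_def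
  have hpart : ∀ n x, f n x = ∑ k ∈ Finset.range n, g k x := by
    intro n; induction n with
    | zero => intro x; rw [hf0]; simp
    | succ n ih =>
      intro x
      rw [Finset.sum_range_succ, ← ih x]
      show f (n+1) x = f n x + (f (n+1) x - f n x)
      ring
  have htend : ∀ x, Tendsto (fun n => f n x) atTop (nhds (s x)) := by
    intro x
    exact ((hgsum x).hasSum.tendsto_sum_nat).congr fun n => (hpart n x).symm
  have hs_meas : Measurable s := measurable_of_tendsto_metrizable hf_meas
    (tendsto_pi_nhds.mpr htend)
  set D : ℝ := ∑' k, c k with hD_def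
  have hD_nn : 0 ≤ D := tsum_nonneg hc_nn
  have hs_bd : ∀ x, |s x| ≤ D := by
    intro x
    calc |s x| ≤ ∑' k, |g k x| := by
          simpa [Real.norm_eq_abs] using norm_tsum_le_tsum_norm (f := fun k => g k x)
            (by simpa [Real.norm_eq_abs] using hgabs_sum x)
      _ ≤ D := Summable.tsum_le_tsum (fun k => hgc k x) (hgabs_sum x) hc_sum
  have hf_bd : ∀ n x, |f n x| ≤ D := by
    intro n x
    rw [hpart n x]
    calc |∑ k ∈ Finset.range n, g k x| ≤ ∑ k ∈ Finset.range n, |g k x| :=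
          Finset.abs_sum_le_sum_abs _ _
      _ ≤ ∑ k ∈ Finset.range n, c k := Finset.sum_le_sum fun k _ => hgc k x
      _ ≤ D := Summable.sum_le_tsum _ (fun k _ => hc_nn k) hc_sum
  have hs_ge : ∀ x ∈ Set.Icc (0:ℝ) 1, β ≤ s x := by
    intro x hx
    have h := Summable.le_tsum (hgsum x) 0 fun j _ => hg_nonneg j x
    rwa [hg0 x, if_pos hx] at h
  have hfix : ∀ x ∈ Set.Icc (0:ℝ) 1,
      s x = α * (∫ y in Set.Icc (0:ℝ) 1, W x y * s y) + β := by
    intro x hx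
    have hL : Tendsto (fun n => f (n+1) x) atTop (nhds (s x)) :=
      (htend x).comp (tendsto_add_atTop_nat 1)
    have hInt : Tendsto (fun n => ∫ y in Set.Icc (0:ℝ) 1, W x y * f n y) atTop
        (nhds (∫ y in Set.Icc (0:ℝ) 1, W x y * s y)) := by
      apply tendsto_integral_of_dominated_convergence (bound := fun _ => D)
      · exact fun n => (hWg_meas _ (hf_meas n) x).aestronglyMeasurable
      · exact integrable_const D
      · intro n
        refine ae_restrict_of_forall_mem measurableSet_Icc fun y hy => ?_
        rw [Real.norm_eq_abs, abs_mul]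
        calc |W x y| * |f n y| ≤ 1 * D :=
              mul_le_mul (habsW x hx y hy) (hf_bd n y) (abs_nonneg _) zero_le_one
          _ = D := one_mul D
      · exact Filter.Eventually.of_forall fun y => (htend y).const_mul (W x y)
    have hR : Tendsto (fun n => f (n+1) x) atTop
        (nhds (α * (∫ y in Set.Icc (0:ℝ) 1, W x y * s y) + β)) := by
      have e : ∀ n, f (n+1) x = α * (∫ y in Set.Icc (0:ℝ) 1, W x y * f n y) + β := by
        intro n; rw [hfs n, hT]; simp only [if_pos hx]
      exact ((hInt.const_mul α).add_const β).congr fun n => (e n).symm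
    exact tendsto_nhds_unique hL hR
  refine ⟨s, hs_meas, ?_, ?_⟩
  · refine lq_bddInt (hs_meas.pow_const 2) (C := D ^ 2) fun x _ => ?_
    rw [abs_pow]
    exact pow_le_pow_left₀ (abs_nonneg _) (hs_bd x) 2
  · intro x hx
    have h0 : 0 ≤ α * (∫ y in Set.Icc (0:ℝ) 1, W x y * s y) + β := by
      rw [← hfix x hx]; linarith [hs_ge x hx]
    rw [hfix x hx, max_eq_right h0]

/-- Linear quadratic graphon game with strategic complements (`α > 0`, `β > 0`,
`α·λ_max(𝕎) < 1`): a Nash equilibrium exists, every Nash equilibrium is strictly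
positive and satisfies `s̄(x) = α ∫₀¹ W(x,y) s̄(y) dy + β` (i.e.
`s̄ = β (I − α𝕎)⁻¹ 1`), and the Nash equilibrium is unique. -/
theorem stmt_12 (W : ℝ → ℝ → ℝ)
    (hmeas : Measurable (Function.uncurry W))
    (hsym : ∀ x y, W x y = W y x)
    (hbd : ∀ x ∈ Set.Icc (0:ℝ) 1, ∀ y ∈ Set.Icc (0:ℝ) 1, W x y ∈ Set.Icc (0:ℝ) 1)
    (α β lam : ℝ) (hα : 0 < α) (hβ : 0 < β) (hlam : 0 ≤ lam)
    (hop : ∀ f : ℝ → ℝ, Measurable f →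
      IntegrableOn (fun x => f x ^ 2) (Set.Icc (0:ℝ) 1) →
      ∫ x in Set.Icc (0:ℝ) 1, (∫ y in Set.Icc (0:ℝ) 1, W x y * f y) ^ 2 ≤
        lam ^ 2 * ∫ x in Set.Icc (0:ℝ) 1, f x ^ 2)
    (hcond : α * lam < 1) :
    (∃ s : ℝ → ℝ, IsLQGraphonNash W α β s) ∧
    (∀ s : ℝ → ℝ, IsLQGraphonNash W α β s → ∀ x ∈ Set.Icc (0:ℝ) 1,
      0 < s x ∧ s x = α * (∫ y in Set.Icc (0:ℝ) 1, W x y * s y) + β) ∧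
    (∀ s t : ℝ → ℝ, IsLQGraphonNash W α β s → IsLQGraphonNash W α β t →
      ∀ x ∈ Set.Icc (0:ℝ) 1, s x = t x) := by
  exact ⟨lq_exists W hmeas hbd α β lam hα hβ hlam hop hcond,
    fun s hs => lq_char W hmeas hbd α β hα hβ s hs,
    fun s t hs ht => lq_uniq W hmeas hbd α β lam hα hβ hlam hop hcond s t hs ht⟩
end

section
/- In the linear quadratic graphon game with substitutes (U(s,z) = −½s² + s(αz+β), α < 0, β > 0, S(x) = ℝ_{≥0}, |α|·λ_max(𝕎) < 1), a strictly positive function s̄ ∈ L²([0,1]) is a Nash equilibrium if and only if s̄ = β·(I + |α|𝕎)^{−1} 1, i.e., s̄(x) + |α|∫₀¹ W(x,y) s̄(y) dy = β for a.e. x ∈ [0,1]. -/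
open MeasureTheory

/-- Linear quadratic graphon game with strategic substitutes (`α < 0`, `β > 0`,
`|α|·λ_max(𝕎) < 1`): a strictly positive square-integrable `s̄` is a Nash
equilibrium, i.e. `s̄(x) = max{0, α ∫ W(x,y)s̄(y)dy + β}` on `[0,1]`, if and only
if `s̄(x) + |α| ∫₀¹ W(x,y) s̄(y) dy = β` on `[0,1]` (i.e. `s̄ = β(I + |α|𝕎)⁻¹1`). -/
theorem stmt_13 (W : ℝ → ℝ → ℝ)
    (hmeas : Measurable (Function.uncurry W))
    (hsym : ∀ x y, W x y = W y x)
    (hbd : ∀ x ∈ Set.Icc (0:ℝ) 1, ∀ y ∈ Set.Icc (0:ℝ) 1, W x y ∈ Set.Icc (0:ℝ) 1)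
    (α β lam : ℝ) (hα : α < 0) (hβ : 0 < β) (hlam : 0 ≤ lam)
    (hop : ∀ f : ℝ → ℝ, Measurable f →
      IntegrableOn (fun x => f x ^ 2) (Set.Icc (0:ℝ) 1) →
      ∫ x in Set.Icc (0:ℝ) 1, (∫ y in Set.Icc (0:ℝ) 1, W x y * f y) ^ 2 ≤
        lam ^ 2 * ∫ x in Set.Icc (0:ℝ) 1, f x ^ 2)
    (hcond : |α| * lam < 1)
    (s : ℝ → ℝ) (hs : Measurable s)
    (hint : IntegrableOn (fun x => s x ^ 2) (Set.Icc (0:ℝ) 1))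
    (hpos : ∀ x ∈ Set.Icc (0:ℝ) 1, 0 < s x) :
    (∀ x ∈ Set.Icc (0:ℝ) 1,
        s x = max 0 (α * (∫ y in Set.Icc (0:ℝ) 1, W x y * s y) + β)) ↔
    (∀ x ∈ Set.Icc (0:ℝ) 1,
        s x + |α| * (∫ y in Set.Icc (0:ℝ) 1, W x y * s y) = β) := by
  have habs : |α| = -α := abs_of_neg hα
  constructor
  · intro h x hx
    have hsx := hpos x hx
    have := h x hx
    have hv : 0 < α * (∫ y in Set.Icc (0:ℝ) 1, W x y * s y) + β := by
      rcases lt_max_iff.mp (this ▸ hsx) with h0 | h0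
      · exact absurd h0 (lt_irrefl 0)
      · exact h0
    rw [this, max_eq_right hv.le, habs]; ring
  · intro h x hx
    have hx' := h x hx
    have hsx := hpos x hx
    rw [habs] at hx'
    rw [max_eq_right (by linarith)]
    linarith
end

section
/- Davis–Kahan type bound: let A and B = A + P be compact self-adjoint operators on a separable Hilbert space with orthonormal eigenbasis for A. Let λ₁ᴬ > λ₂ᴬ be the two largest eigenvalues of A with spectral gap δ = λ₁ᴬ − λ₂ᴬ > 0, let ψ₁ᴬ and ψ₁ᴮ be unit-norm dominant eigenfunctions of A and B respectively, chosen so that ⟨ψ₁ᴮ, ψ₁ᴬ⟩ ≥ 0. Then ‖ψ₁ᴬ − ψ₁ᴮ‖ ≤ 2√2 · ‖P‖ / δ. -/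
open MeasureTheory

open scoped RealInnerProductSpace

lemma lemA {H : Type*} [NormedAddCommGroup H] [InnerProductSpace ℝ H] [CompleteSpace H]
    (T : H →L[ℝ] H) (hTc : IsCompactOperator T) (hTsa : IsSelfAdjoint T)
    (K : Submodule ℝ H) (hKc : IsClosed (K : Set H)) (hKi : ∀ x ∈ K, T x ∈ K)
    (s : ℝ) (hs : 0 < s) (hub : ∀ x ∈ K, ‖x‖ = 1 → ⟪x, T x⟫ ≤ s)
    (happrox : ∀ ε : ℝ, 0 < ε → ∃ x ∈ K, ‖x‖ = 1 ∧ s - ε < ⟪x, T x⟫) :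
    ∃ v ∈ K, ‖v‖ = 1 ∧ T v = s • v := by
  have hsym : ∀ x y : H, ⟪T x, y⟫ = ⟪x, T y⟫ := fun x y => hTsa.isSymmetric x y
  -- scaled upper bound on K
  have hub' : ∀ x ∈ K, ⟪x, T x⟫ ≤ s * ‖x‖ ^ 2 := by
    intro x hx
    rcases eq_or_ne x 0 with rfl | hx0
    · simp
    · have hn : ‖x‖ ≠ 0 := norm_ne_zero_iff.mpr hx0
      have h1 : ‖(‖x‖⁻¹ • x)‖ = 1 := by
        rw [norm_smul, norm_inv, norm_norm, inv_mul_cancel₀ hn]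
      have := hub _ (K.smul_mem (‖x‖⁻¹) hx) h1
      rw [real_inner_smul_left, _root_.map_smul, real_inner_smul_right] at this
      have hn2 : (0:ℝ) < ‖x‖ ^ 2 := by positivity
      have hq : ‖x‖ ^ 2 * (‖x‖⁻¹ * (‖x‖⁻¹ * ⟪x, T x⟫)) = ⟪x, T x⟫ := by
        field_simp
      nlinarith [mul_le_mul_of_nonneg_left this (le_of_lt hn2)]
  set a : ℝ := ‖T‖ + 1 with ha
  set c : ℝ := s + a with hc
  set T' : H →L[ℝ] H := T + a • ContinuousLinearMap.id ℝ H with hT'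
  have hT'apply : ∀ x, T' x = T x + a • x := fun x => rfl
  have hT'sym : ∀ x y : H, ⟪T' x, y⟫ = ⟪x, T' y⟫ := by
    intro x y
    simp only [hT'apply, inner_add_left, inner_add_right, real_inner_smul_left,
      real_inner_smul_right, hsym]
  -- positivity of T' globally
  have hpos : ∀ x : H, 0 ≤ ⟪x, T' x⟫ := by
    intro x
    have h1 : |⟪x, T x⟫| ≤ ‖x‖ * ‖T x‖ := abs_real_inner_le_norm x (T x)
    have h2 : ‖T x‖ ≤ ‖T‖ * ‖x‖ := T.le_opNorm x
    have : -(‖T‖ * (‖x‖ * ‖x‖)) ≤ ⟪x, T x⟫ := by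
      nlinarith [norm_nonneg x, abs_le.mp h1]
    have hx2 : ⟪x, (a:ℝ) • x⟫ = a * ‖x‖ ^2 := by
      rw [real_inner_smul_right, real_inner_self_eq_norm_sq]
    simp only [hT'apply, inner_add_right, hx2]
    nlinarith [norm_nonneg x]
  -- Cauchy-Schwarz for the positive form of T'
  have hCS : ∀ x y : H, ⟪x, T' y⟫ ^ 2 ≤ ⟪x, T' x⟫ * ⟪y, T' y⟫ := by
    intro x y
    have key : ∀ t : ℝ, 0 ≤ ⟪y, T' y⟫ * (t * t) + (2 * ⟪x, T' y⟫) * t + ⟪x, T' x⟫ := by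
      intro t
      have := hpos (x + t • y)
      simp only [inner_add_left, inner_add_right, map_add, _root_.map_smul,
        real_inner_smul_left, real_inner_smul_right] at this
      have hxy : ⟪y, T' x⟫ = ⟪x, T' y⟫ := by rw [← hT'sym x y, real_inner_comm]
      rw [hxy] at this
      nlinarith [this]
    have hd := discrim_le_zero key
    rw [discrim] at hd
    nlinarith [hd]
  -- key bound: ‖T' x‖^2 ≤ c * ⟪x, T' x⟫ for x in K
  have hT'ub : ∀ x ∈ K, ⟪x, T' x⟫ ≤ c * ‖x‖ ^ 2 := by
    intro x hx
    have := hub' x hx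
    have hx2 : ⟪x, (a:ℝ) • x⟫ = a * ‖x‖ ^ 2 := by
      rw [real_inner_smul_right, real_inner_self_eq_norm_sq]
    simp only [hT'apply, inner_add_right, hx2, hc]
    nlinarith [norm_nonneg x]
  have hkey : ∀ x ∈ K, ‖T' x‖ ^ 2 ≤ c * ⟪x, T' x⟫ := by
    intro x hx
    have hTx : T' x ∈ K := by
      have := hKi x hx
      simpa [hT'apply] using K.add_mem this (K.smul_mem a hx)
    have h1 : ⟪T' x, T' x⟫ ^ 2 ≤ ⟪T' x, T' (T' x)⟫ * ⟪x, T' x⟫ := hCS (T' x) x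
    have h2 : ⟪T' x, T' (T' x)⟫ ≤ c * ‖T' x‖ ^ 2 := hT'ub (T' x) hTx
    have h3 : ⟪T' x, T' x⟫ = ‖T' x‖ ^ 2 := real_inner_self_eq_norm_sq _
    rcases eq_or_lt_of_le (norm_nonneg (T' x)) with h0 | h0
    · rw [← h0]
      have : (0:ℝ) ≤ c * ⟪x, T' x⟫ := by
        have hc0 : (0:ℝ) ≤ c := by
          have : (0:ℝ) ≤ ‖T‖ := norm_nonneg _
          simp only [hc, ha]; linarith
        exact mul_nonneg hc0 (hpos x)
      simpa using this
    · have hn2 : (0:ℝ) < ‖T' x‖ ^ 2 := by positivity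
      nlinarith [hpos x, hpos (T' x)]
  -- choose the maximizing sequence
  have hseq : ∀ n : ℕ, ∃ x ∈ K, ‖x‖ = 1 ∧ s - 1/(n+1) < ⟪x, T x⟫ := by
    intro n
    exact happrox (1/(n+1)) (by positivity)
  choose x hxK hx1 hxlb using hseq
  -- ‖T xₙ - s • xₙ‖² ≤ c * (s - ⟪xₙ, T xₙ⟫)
  have hconv : Filter.Tendsto (fun n => T (x n) - s • x n) Filter.atTop (nhds 0) := by
    have hbound : ∀ n : ℕ, ‖T (x n) - s • x n‖ ^ 2 ≤ c / (n+1) := by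
      intro n
      have hx' := hxK n
      have heq : T (x n) - s • x n = T' (x n) - c • x n := by
        simp only [hT'apply, hc]
        module
      have hexp : ‖T' (x n) - c • x n‖ ^ 2
          = ‖T' (x n)‖ ^ 2 - 2 * (c * ⟪x n, T' (x n)⟫) + c ^ 2 * ‖x n‖ ^ 2 := by
        have h4 : ⟪T' (x n), c • x n⟫ = c * ⟪x n, T' (x n)⟫ := by
          rw [real_inner_smul_right, real_inner_comm]
        have h8 : ‖c • x n‖ ^ 2 = c ^ 2 * ‖x n‖ ^ 2 := by
          rw [norm_smul]; simp [Real.norm_eq_abs, mul_pow, sq_abs]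
        rw [norm_sub_sq_real, h4, h8]
      have h5 := hkey (x n) hx'
      have h6 : ⟪x n, T' (x n)⟫ = ⟪x n, T (x n)⟫ + a := by
        have : ⟪x n, (a:ℝ) • (x n)⟫ = a * ‖x n‖ ^ 2 := by
          rw [real_inner_smul_right, real_inner_self_eq_norm_sq]
        simp only [hT'apply, inner_add_right, this, hx1 n]
        ring
      have h7 := hxlb n
      have hc0 : (0:ℝ) ≤ c := by
        have : (0:ℝ) ≤ ‖T‖ := norm_nonneg _
        simp only [hc, ha]; linarith
      have h9 : s - ⟪x n, T (x n)⟫ ≤ 1/(n+1) := by linarith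
      have h10 : c * (s - ⟪x n, T (x n)⟫) ≤ c * (1/(n+1)) :=
        mul_le_mul_of_nonneg_left h9 hc0
      have e1 : ‖T' (x n)‖ ^ 2 - 2 * (c * ⟪x n, T' (x n)⟫) + c ^ 2 * ‖x n‖ ^ 2
          ≤ c * (s - ⟪x n, T (x n)⟫) := by
        rw [hx1 n, h6]
        have : c * (s - ⟪x n, T (x n)⟫) = c * c - c * (⟪x n, T (x n)⟫ + a) := by
          simp only [hc]; ring
        rw [this]
        nlinarith [h5, h6]
      have e4 : c / ((n:ℝ)+1) = c * (1/((n:ℝ)+1)) := by ring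
      rw [heq, hexp, e4]
      exact e1.trans h10
    have h0 : Filter.Tendsto (fun n : ℕ => c / (n+1)) Filter.atTop (nhds 0) := by
      apply Filter.Tendsto.div_atTop tendsto_const_nhds
      exact Filter.tendsto_atTop_add_const_right _ _ tendsto_natCast_atTop_atTop
    have hnorm2 : Filter.Tendsto (fun n => ‖T (x n) - s • x n‖ ^ 2) Filter.atTop (nhds 0) := by
      apply squeeze_zero (fun n => by positivity) hbound h0
    have hnorm : Filter.Tendsto (fun n => ‖T (x n) - s • x n‖) Filter.atTop (nhds 0) := by
      have := hnorm2.sqrt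
      simpa [Real.sqrt_sq (norm_nonneg _)] using this
    rwa [tendsto_zero_iff_norm_tendsto_zero]
  -- compactness: extract a convergent subsequence of T xₙ
  have hcpt : IsCompact (closure ((T : H →ₗ[ℝ] H) '' Metric.closedBall 0 1)) :=
    IsCompactOperator.isCompact_closure_image_closedBall (𝕜₁ := ℝ) (f := (T : H →ₗ[ℝ] H)) hTc 1
  have hmem : ∀ n, T (x n) ∈ closure ((T : H →ₗ[ℝ] H) '' Metric.closedBall 0 1) := by
    intro n
    apply subset_closure
    exact ⟨x n, by simp [Metric.mem_closedBall, dist_eq_norm, hx1 n], rfl⟩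
  obtain ⟨y, hy, φ, hφ, hyconv⟩ := hcpt.tendsto_subseq hmem
  set v : H := s⁻¹ • y with hv
  have h0conv : Filter.Tendsto (fun n => T (x (φ n)) - s • x (φ n)) Filter.atTop (nhds 0) :=
    hconv.comp (hφ.tendsto_atTop)
  have hsx : Filter.Tendsto (fun n => s • x (φ n)) Filter.atTop (nhds y) := by
    have : (fun n => s • x (φ n))
        = fun n => T (x (φ n)) - (T (x (φ n)) - s • x (φ n)) := by
      funext n; abel
    rw [this]
    simpa using hyconv.sub h0conv
  have hxv : Filter.Tendsto (fun n => x (φ n)) Filter.atTop (nhds v) := by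
    have := hsx.const_smul (s⁻¹)
    have heq : (fun n => s⁻¹ • s • x (φ n)) = fun n => x (φ n) := by
      funext n
      rw [smul_smul, inv_mul_cancel₀ (ne_of_gt hs), one_smul]
    rw [← heq]
    exact this
  have hvK : v ∈ K := hKc.mem_of_tendsto hxv (Filter.Eventually.of_forall fun n => hxK (φ n))
  have hvnorm : ‖v‖ = 1 := by
    have h1 : Filter.Tendsto (fun n => ‖x (φ n)‖) Filter.atTop (nhds ‖v‖) := hxv.norm
    have h2 : Filter.Tendsto (fun n => ‖x (φ n)‖) Filter.atTop (nhds 1) := by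
      simpa [hx1] using tendsto_const_nhds (x := (1:ℝ)) (f := Filter.atTop (α := ℕ))
    exact tendsto_nhds_unique h1 h2
  have hTv : T v = s • v := by
    have h1 : Filter.Tendsto (fun n => T (x (φ n))) Filter.atTop (nhds (T v)) :=
      (T.continuous.tendsto v).comp hxv
    have h2 : T v = y := tendsto_nhds_unique h1 hyconv
    rw [h2, hv, smul_smul, mul_inv_cancel₀ (ne_of_gt hs), one_smul]
  exact ⟨v, hvK, hvnorm, hTv⟩

lemma lemB {H : Type*} [NormedAddCommGroup H] [InnerProductSpace ℝ H] [CompleteSpace H]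
    (T : H →L[ℝ] H) (hTc : IsCompactOperator T) (hTsa : IsSelfAdjoint T)
    (K : Submodule ℝ H) (hKc : IsClosed (K : Set H)) (hKi : ∀ x ∈ K, T x ∈ K)
    (x₀ : H) (hx₀K : x₀ ∈ K) (hx₀1 : ‖x₀‖ = 1) (hq : 0 < ⟪x₀, T x₀⟫) :
    ∃ v ∈ K, ‖v‖ = 1 ∧ ∃ μ : ℝ, T v = μ • v := by
  set S : Set ℝ := {r : ℝ | ∃ x ∈ K, ‖x‖ = 1 ∧ ⟪x, T x⟫ = r} with hS
  have hne : S.Nonempty := ⟨⟪x₀, T x₀⟫, x₀, hx₀K, hx₀1, rfl⟩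
  have hbdd : BddAbove S := by
    refine ⟨‖T‖, ?_⟩
    rintro r ⟨x, hxK, hx1, rfl⟩
    calc ⟪x, T x⟫ ≤ ‖x‖ * ‖T x‖ := real_inner_le_norm x (T x)
      _ ≤ ‖x‖ * (‖T‖ * ‖x‖) := by
          exact mul_le_mul_of_nonneg_left (T.le_opNorm x) (norm_nonneg x)
      _ = ‖T‖ := by rw [hx1]; ring
  set s : ℝ := sSup S with hs'
  have hspos : 0 < s := lt_of_lt_of_le hq (le_csSup hbdd ⟨x₀, hx₀K, hx₀1, rfl⟩)
  obtain ⟨v, hvK, hv1, hveq⟩ := lemA T hTc hTsa K hKc hKi s hspos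
    (fun x hxK hx1 => le_csSup hbdd ⟨x, hxK, hx1, rfl⟩)
    (fun ε hε => by
      obtain ⟨r, hrS, hr⟩ := exists_lt_of_lt_csSup hne (by linarith : s - ε < s)
      obtain ⟨x, hxK, hx1, rfl⟩ := hrS
      exact ⟨x, hxK, hx1, hr⟩)
  exact ⟨v, hvK, hv1, s, hveq⟩

lemma exists_eigen {H : Type*} [NormedAddCommGroup H] [InnerProductSpace ℝ H] [CompleteSpace H]
    (T : H →L[ℝ] H) (hTc : IsCompactOperator T) (hTsa : IsSelfAdjoint T)
    (K : Submodule ℝ H) (hKc : IsClosed (K : Set H)) (hKi : ∀ x ∈ K, T x ∈ K)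
    (u : H) (huK : u ∈ K) (hu1 : ‖u‖ = 1) :
    ∃ v ∈ K, ‖v‖ = 1 ∧ ∃ μ : ℝ, T v = μ • v := by
  by_cases hq : ∃ x ∈ K, ‖x‖ = 1 ∧ ⟪x, T x⟫ ≠ 0
  · obtain ⟨x, hxK, hx1, hx0⟩ := hq
    rcases hx0.lt_or_gt with hneg | hpos
    · have hnegq : 0 < ⟪x, (-T) x⟫ := by
        simp only [ContinuousLinearMap.neg_apply, inner_neg_right]
        linarith
      obtain ⟨v, hvK, hv1, μ, hμ⟩ := lemB (-T) hTc.neg hTsa.neg K hKc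
        (fun y hy => by
          simpa only [ContinuousLinearMap.neg_apply] using K.neg_mem (hKi y hy))
        x hxK hx1 hnegq
      refine ⟨v, hvK, hv1, -μ, ?_⟩
      have : -(T v) = μ • v := by simpa using hμ
      rw [neg_smul, ← this, neg_neg]
    · exact lemB T hTc hTsa K hKc hKi x hxK hx1 hpos
  · push_neg at hq
    -- quadratic form vanishes on K; polarization gives T = 0 on K
    have hform : ∀ x ∈ K, ⟪x, T x⟫ = 0 := by
      intro x hxK
      rcases eq_or_ne x 0 with rfl | hx0
      · simp
      · have hn : ‖x‖ ≠ 0 := norm_ne_zero_iff.mpr hx0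
        have h1 : ‖(‖x‖⁻¹ • x)‖ = 1 := by
          rw [norm_smul, norm_inv, norm_norm, inv_mul_cancel₀ hn]
        have := hq _ (K.smul_mem (‖x‖⁻¹) hxK) h1
        rw [real_inner_smul_left, _root_.map_smul, real_inner_smul_right] at this
        have : ⟪x, T x⟫ = 0 := by
          field_simp at this
          simpa using this
        exact this
    have hzero : ∀ y ∈ K, T y = 0 := by
      intro y hyK
      have hTy : T y ∈ K := hKi y hyK
      have hsum := hform (T y + y) (K.add_mem hTy hyK)
      have h1 := hform (T y) hTy
      have h2 := hform y hyK
      have hsym : ⟪y, T (T y)⟫ = ⟪T y, T y⟫ := by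
        have h := hTsa.isSymmetric (T y) y
        simp only [ContinuousLinearMap.coe_coe] at h
        rw [real_inner_comm, ← h]
      simp only [map_add, inner_add_left, inner_add_right] at hsum
      have hTT : ⟪T y, T y⟫ = 0 := by
        have h3 : ⟪T y, T y⟫ = ⟪y, T (T y)⟫ := hsym.symm
        nlinarith [hsum, h1, h2, real_inner_comm y (T y), hsym,
          real_inner_comm (T y) y]
      exact inner_self_eq_zero.mp hTT
    refine ⟨u, huK, hu1, 0, by rw [hzero u huK, zero_smul]⟩

lemma form_bound {H : Type*} [NormedAddCommGroup H] [InnerProductSpace ℝ H] [CompleteSpace H]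
    (T : H →L[ℝ] H) (hTsa : IsSelfAdjoint T) (lam2 : ℝ) (x : H)
    (hx : x ∈ ⨆ μ : {μ : ℝ // μ ≤ lam2},
      Module.End.eigenspace (T : H →ₗ[ℝ] H) (μ : ℝ)) :
    ⟪x, T x⟫ ≤ lam2 * ‖x‖ ^ 2 := by
  rw [Submodule.mem_iSup_iff_exists_finsupp] at hx
  obtain ⟨f, hf, hsum⟩ := hx
  set s := f.support with hs
  have hxeq : x = ∑ i ∈ s, f i := hsum.symm
  have heig : ∀ i : {μ : ℝ // μ ≤ lam2}, T (f i) = (i : ℝ) • f i := by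
    intro i
    have := Module.End.mem_eigenspace_iff.mp (hf i)
    simpa using this
  have horth : ∀ i j : {μ : ℝ // μ ≤ lam2}, i ≠ j → ⟪f i, f j⟫ = 0 := by
    intro i j hij
    have hsym := hTsa.isSymmetric (f i) (f j)
    simp only [ContinuousLinearMap.coe_coe] at hsym
    rw [heig i, heig j, real_inner_smul_left, real_inner_smul_right] at hsym
    have hne : (i : ℝ) ≠ (j : ℝ) := fun h => hij (Subtype.coe_injective h)
    have hz : ((i:ℝ) - (j:ℝ)) * ⟪f i, f j⟫ = 0 := by
      rw [sub_mul, hsym, sub_self]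
    rcases mul_eq_zero.mp hz with h | h
    · exact absurd (sub_eq_zero.mp h) hne
    · exact h
  have h1 : ⟪x, T x⟫ = ∑ i ∈ s, (i : ℝ) * ‖f i‖ ^ 2 := by
    rw [hxeq, map_sum, sum_inner]
    refine Finset.sum_congr rfl fun i hi => ?_
    rw [inner_sum]
    rw [Finset.sum_eq_single i]
    · rw [heig i, real_inner_smul_right, real_inner_self_eq_norm_sq]
    · intro j _ hji
      rw [heig j, real_inner_smul_right, horth i j (fun h => hji h.symm), mul_zero]
    · intro h; exact absurd hi h
  have h2 : ‖x‖ ^ 2 = ∑ i ∈ s, ‖f i‖ ^ 2 := by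
    rw [← real_inner_self_eq_norm_sq, hxeq, sum_inner]
    refine Finset.sum_congr rfl fun i hi => ?_
    rw [inner_sum, Finset.sum_eq_single i]
    · rw [real_inner_self_eq_norm_sq]
    · intro j _ hji
      exact horth i j (fun h => hji h.symm)
    · intro h; exact absurd hi h
  rw [h1, h2, Finset.mul_sum]
  refine Finset.sum_le_sum fun i _ => ?_
  exact mul_le_mul_of_nonneg_right i.2 (by positivity)

lemma key_bound {H : Type*} [NormedAddCommGroup H] [InnerProductSpace ℝ H] [CompleteSpace H]
    (A : H →L[ℝ] H) (hAsa : IsSelfAdjoint A) (hAc : IsCompactOperator A)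
    (lam1 lam2 : ℝ) (ψA : H) (hgap : lam2 < lam1)
    (hA1 : A ψA = lam1 • ψA) (hψA : ‖ψA‖ = 1)
    (heig : ∀ μ : ℝ, (∃ v : H, v ≠ 0 ∧ A v = μ • v) → μ = lam1 ∨ μ ≤ lam2)
    (hsimple : ∀ v : H, A v = lam1 • v → ∃ c : ℝ, v = c • ψA)
    (w : H) (hw : ⟪ψA, w⟫ = 0) :
    ⟪w, A w⟫ ≤ lam2 * ‖w‖ ^ 2 := by
  have hsym : ∀ x y : H, ⟪A x, y⟫ = ⟪x, A y⟫ := fun x y => hAsa.isSymmetric x y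
  set K : Submodule ℝ H := (ℝ ∙ ψA)ᗮ with hK
  have hKmem : ∀ x : H, x ∈ K ↔ ⟪ψA, x⟫ = 0 := fun x =>
    Submodule.mem_orthogonal_singleton_iff_inner_right
  have hKc : IsClosed (K : Set H) := Submodule.isClosed_orthogonal _
  have hKi : ∀ x ∈ K, A x ∈ K := by
    intro x hx
    rw [hKmem] at hx ⊢
    rw [← hsym, hA1, real_inner_smul_left, hx, mul_zero]
  set W : Submodule ℝ H :=
    ⨆ μ : {μ : ℝ // μ ≤ lam2}, Module.End.eigenspace (A : H →ₗ[ℝ] H) (μ : ℝ) with hW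
  -- each small eigenspace is ⊥ ψA
  have hEK : ∀ μ : {μ : ℝ // μ ≤ lam2},
      Module.End.eigenspace (A : H →ₗ[ℝ] H) (μ : ℝ) ≤ K := by
    intro μ v hv
    have hv' : A v = (μ : ℝ) • v := by
      simpa using Module.End.mem_eigenspace_iff.mp hv
    rw [hKmem]
    have h1 : lam1 * ⟪ψA, v⟫ = (μ : ℝ) * ⟪ψA, v⟫ := by
      have := hsym ψA v
      rw [hA1, hv', real_inner_smul_left, real_inner_smul_right] at this
      exact this
    have hne : lam1 - (μ : ℝ) ≠ 0 := by
      have := μ.2; intro h; nlinarith [sub_eq_zero.mp h]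
    have hz : (lam1 - (μ : ℝ)) * ⟪ψA, v⟫ = 0 := by rw [sub_mul, h1, sub_self]
    rcases mul_eq_zero.mp hz with h | h
    · exact absurd h hne
    · exact h
  have hWK : W ≤ K := iSup_le hEK
  -- W is A-invariant
  have hWinv : ∀ x ∈ W, A x ∈ W := by
    intro x hx
    rw [hW, Submodule.mem_iSup_iff_exists_finsupp] at hx
    obtain ⟨f, hf, hsum⟩ := hx
    have : A x = ∑ i ∈ f.support, A (f i) := by
      rw [← hsum]; exact map_sum A _ _
    rw [this]
    apply Submodule.sum_mem
    intro i _
    have hfi : A (f i) ∈ Module.End.eigenspace (A : H →ₗ[ℝ] H) (i : ℝ) := by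
      have h1 : A (f i) = (i : ℝ) • f i := by
        simpa using Module.End.mem_eigenspace_iff.mp (hf i)
      rw [Module.End.mem_eigenspace_iff]
      simp only [ContinuousLinearMap.coe_coe, h1, _root_.map_smul]
    exact le_iSup (fun μ : {μ : ℝ // μ ≤ lam2} =>
      Module.End.eigenspace (A : H →ₗ[ℝ] H) (μ : ℝ)) i hfi
  set Wb : Submodule ℝ H := W.topologicalClosure with hWb
  have hWbK : Wb ≤ K := Submodule.topologicalClosure_minimal _ hWK hKc
  set K₁ : Submodule ℝ H := K ⊓ Wᗮ with hK₁
  have hK₁c : IsClosed (K₁ : Set H) := by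
    rw [hK₁, Submodule.coe_inf]
    exact hKc.inter (Submodule.isClosed_orthogonal _)
  have hK₁i : ∀ x ∈ K₁, A x ∈ K₁ := by
    intro x hx
    rw [hK₁, Submodule.mem_inf] at hx ⊢
    refine ⟨hKi x hx.1, ?_⟩
    rw [Submodule.mem_orthogonal]
    intro u hu
    rw [← hsym]
    exact (Submodule.mem_orthogonal W x).mp hx.2 (A u) (hWinv u hu)
  -- K₁ is trivial
  have hK₁bot : K₁ = ⊥ := by
    by_contra hne
    obtain ⟨u, huK₁, hu0⟩ := Submodule.exists_mem_ne_zero_of_ne_bot hne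
    have hn : ‖u‖ ≠ 0 := norm_ne_zero_iff.mpr hu0
    have hu1 : ‖(‖u‖⁻¹ • u)‖ = 1 := by
      rw [norm_smul, norm_inv, norm_norm, inv_mul_cancel₀ hn]
    obtain ⟨v, hvK₁, hv1, μ, hμ⟩ := exists_eigen A hAc hAsa K₁ hK₁c hK₁i
      (‖u‖⁻¹ • u) (K₁.smul_mem _ huK₁) hu1
    have hv0 : v ≠ 0 := by
      intro h; rw [h, norm_zero] at hv1; exact one_ne_zero hv1.symm
    rcases heig μ ⟨v, hv0, hμ⟩ with h | h
    · obtain ⟨c, hc⟩ := hsimple v (by rw [hμ, h])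
      have hvK : v ∈ K := (inf_le_left : K₁ ≤ K) hvK₁
      rw [hKmem] at hvK
      rw [hc, real_inner_smul_right, real_inner_self_eq_norm_sq, hψA] at hvK
      have : c = 0 := by simpa using hvK
      rw [this, zero_smul] at hc
      exact hv0 hc
    · have hvW : v ∈ W := by
        have hvE : v ∈ Module.End.eigenspace (A : H →ₗ[ℝ] H) μ := by
          rw [Module.End.mem_eigenspace_iff]
          simpa using hμ
        exact le_iSup (fun ν : {ν : ℝ // ν ≤ lam2} =>
          Module.End.eigenspace (A : H →ₗ[ℝ] H) (ν : ℝ)) ⟨μ, h⟩ hvE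
      have hvWo : v ∈ Wᗮ := (inf_le_right : K₁ ≤ Wᗮ) hvK₁
      have : ⟪v, v⟫ = 0 := (Submodule.mem_orthogonal W v).mp hvWo v hvW
      exact hv0 (inner_self_eq_zero.mp this)
  -- every element of K lies in the closure of W
  have hwWb : w ∈ Wb := by
    haveI : CompleteSpace Wb := W.isClosed_topologicalClosure.completeSpace_coe
    obtain ⟨u, hu, r, hr, hwur⟩ := Wb.exists_add_mem_mem_orthogonal w
    have hrK : r ∈ K := by
      have huK : u ∈ K := hWbK hu
      have : r = w - u := by rw [hwur]; abel
      rw [this]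
      exact K.sub_mem ((hKmem w).mpr hw) huK
    have hrWo : r ∈ Wᗮ := (Submodule.orthogonal_le (Submodule.le_topologicalClosure W)) hr
    have : r ∈ K₁ := Submodule.mem_inf.mpr ⟨hrK, hrWo⟩
    rw [hK₁bot, Submodule.mem_bot] at this
    rw [hwur, this, add_zero]
    exact hu
  -- conclude by continuity
  have hC : (Wb : Set H) ⊆ {x : H | ⟪x, A x⟫ ≤ lam2 * ‖x‖ ^ 2} := by
    rw [hWb, Submodule.topologicalClosure_coe]
    apply closure_minimal
    · intro x hx
      exact form_bound A hAsa lam2 x hx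
    · apply isClosed_le
      · exact (continuous_id.inner (A.continuous))
      · exact continuous_const.mul (continuous_norm.pow 2)
  exact hC hwWb

/-- Davis–Kahan type bound: for compact self-adjoint operators `A` and `B = A + P`
on a separable Hilbert space, with `λ₁ > λ₂` the two largest eigenvalues of `A`
(the top eigenvalue being simple with unit eigenvector `ψA`), `ψB` a unit dominant
eigenvector of `B` with `⟨ψB, ψA⟩ ≥ 0`, and the top eigenvalues equal to the
respective operator norms, one has `‖ψA − ψB‖ ≤ 2√2 ‖P‖ / (λ₁ − λ₂)`. -/
theorem stmt_15 {H : Type*} [NormedAddCommGroup H] [InnerProductSpace ℝ H]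
    [CompleteSpace H] [TopologicalSpace.SeparableSpace H]
    (A B P : H →L[ℝ] H) (hP : P = B - A)
    (hAsa : IsSelfAdjoint A) (hBsa : IsSelfAdjoint B)
    (hAc : IsCompactOperator A) (hBc : IsCompactOperator B)
    (lam1 lam2 lamB : ℝ) (ψA ψB : H)
    (hgap : lam2 < lam1)
    (hA1 : A ψA = lam1 • ψA) (hψA : ‖ψA‖ = 1)
    (heig : ∀ μ : ℝ, (∃ v : H, v ≠ 0 ∧ A v = μ • v) → μ = lam1 ∨ μ ≤ lam2)
    (hsimple : ∀ v : H, A v = lam1 • v → ∃ c : ℝ, v = c • ψA)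
    (hB1 : B ψB = lamB • ψB) (hψB : ‖ψB‖ = 1)
    (hBtop : ∀ μ : ℝ, (∃ v : H, v ≠ 0 ∧ B v = μ • v) → μ ≤ lamB)
    (hnA : ‖A‖ = lam1) (hnB : ‖B‖ = lamB)
    (hpos : 0 ≤ (inner ℝ ψB ψA : ℝ)) :
    ‖ψA - ψB‖ ≤ 2 * Real.sqrt 2 * ‖P‖ / (lam1 - lam2) := by
  obtain ⟨δ, hδ⟩ : ∃ δ : ℝ, δ = lam1 - lam2 := ⟨_, rfl⟩
  rw [← hδ]
  have hδpos : 0 < δ := by rw [hδ]; linarith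
  obtain ⟨c, hc⟩ : ∃ c : ℝ, c = ⟪ψB, ψA⟫ := ⟨_, rfl⟩
  rw [← hc] at hpos
  have hcomm : ⟪ψA, ψB⟫ = c := by rw [hc, real_inner_comm]
  have hc1 : c ≤ 1 := by
    have := real_inner_le_norm ψB ψA
    rw [hψA, hψB, ← hc] at this
    simpa using this
  obtain ⟨w, hw⟩ : ∃ w : H, w = ψB - c • ψA := ⟨_, rfl⟩
  have hwperp : ⟪ψA, w⟫ = 0 := by
    rw [hw, inner_sub_right, real_inner_smul_right, real_inner_self_eq_norm_sq, hψA, hcomm]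
    ring
  have hw2 : ‖w‖ ^ 2 = 1 - c ^ 2 := by
    rw [hw, norm_sub_sq_real, real_inner_smul_right, ← hc, norm_smul, hψB, hψA]
    simp [Real.norm_eq_abs, mul_pow, sq_abs]
    ring
  -- the key spectral-gap estimate
  have hkey : ⟪w, A w⟫ ≤ lam2 * ‖w‖ ^ 2 :=
    key_bound A hAsa hAc lam1 lam2 ψA hgap hA1 hψA heig hsimple w hwperp
  -- ‖A w - lam1 • w‖ ≥ δ ‖w‖
  have hlow : δ * ‖w‖ ^ 2 ≤ ⟪w, lam1 • w - A w⟫ := by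
    rw [inner_sub_right, real_inner_smul_right, real_inner_self_eq_norm_sq, hδ]
    nlinarith [hkey]
  have hCS : ⟪w, lam1 • w - A w⟫ ≤ ‖w‖ * ‖lam1 • w - A w‖ :=
    real_inner_le_norm _ _
  have hAwlam : lam1 • w - A w = lam1 • ψB - A ψB := by
    rw [hw, smul_sub, map_sub, ContinuousLinearMap.map_smul, hA1]
    module
  -- ‖lam1 • ψB - A ψB‖ ≤ 2 ‖P‖
  have hup : ‖lam1 • ψB - A ψB‖ ≤ 2 * ‖P‖ := by
    have hA : A ψB = lamB • ψB - P ψB := by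
      rw [hP]
      simp only [ContinuousLinearMap.sub_apply, hB1]
      abel
    have heq : lam1 • ψB - A ψB = (lam1 - lamB) • ψB + P ψB := by
      rw [hA, sub_smul]
      abel
    rw [heq]
    have h1 : ‖(lam1 - lamB) • ψB‖ ≤ ‖P‖ := by
      rw [norm_smul, hψB, mul_one, Real.norm_eq_abs]
      have := abs_norm_sub_norm_le A B
      rw [hnA, hnB] at this
      calc |lam1 - lamB| = |lamB - lam1| := abs_sub_comm _ _
        _ ≤ ‖B - A‖ := by
            have := abs_norm_sub_norm_le B A
            rw [hnA, hnB] at this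
            exact this
        _ = ‖P‖ := by rw [hP]
    have h2 : ‖P ψB‖ ≤ ‖P‖ := by
      have := P.le_opNorm ψB
      rw [hψB, mul_one] at this
      exact this
    calc ‖(lam1 - lamB) • ψB + P ψB‖ ≤ ‖(lam1 - lamB) • ψB‖ + ‖P ψB‖ := norm_add_le _ _
      _ ≤ 2 * ‖P‖ := by linarith
  -- δ ‖w‖ ≤ 2 ‖P‖
  have hδw : δ * ‖w‖ ≤ 2 * ‖P‖ := by
    rcases eq_or_lt_of_le (norm_nonneg w) with h0 | h0
    · rw [← h0, mul_zero]
      positivity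
    · have h3 : δ * ‖w‖ ^ 2 ≤ ‖w‖ * (2 * ‖P‖) := by
        calc δ * ‖w‖ ^ 2 ≤ ⟪w, lam1 • w - A w⟫ := hlow
          _ ≤ ‖w‖ * ‖lam1 • w - A w‖ := hCS
          _ = ‖w‖ * ‖lam1 • ψB - A ψB‖ := by rw [hAwlam]
          _ ≤ ‖w‖ * (2 * ‖P‖) := by
              exact mul_le_mul_of_nonneg_left hup (norm_nonneg w)
      nlinarith [h3]
  -- square the estimate
  have h1c2 : δ ^ 2 * (1 - c ^ 2) ≤ 4 * ‖P‖ ^ 2 := by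
    have := mul_self_le_mul_self (by positivity : (0:ℝ) ≤ δ * ‖w‖) hδw
    nlinarith [hw2, this]
  -- final computation
  have hfin2 : ‖ψA - ψB‖ ^ 2 ≤ 8 * ‖P‖ ^ 2 / δ ^ 2 := by
    have hnorm : ‖ψA - ψB‖ ^ 2 = 2 - 2 * c := by
      rw [norm_sub_sq_real, hψA, hψB, hcomm]
      ring
    have h2c : 2 - 2 * c ≤ 2 * (1 - c ^ 2) := by nlinarith [hpos]
    have hδ2 : (0:ℝ) < δ ^ 2 := by positivity
    rw [hnorm, le_div_iff₀ hδ2]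
    have e1 : (2 - 2 * c) * δ ^ 2 ≤ 2 * (1 - c ^ 2) * δ ^ 2 :=
      mul_le_mul_of_nonneg_right h2c (le_of_lt hδ2)
    have e2 : 2 * (1 - c ^ 2) * δ ^ 2 = 2 * (δ ^ 2 * (1 - c ^ 2)) := by ring
    linarith [h1c2]
  have hrhs : (2 * Real.sqrt 2 * ‖P‖ / δ) ^ 2 = 8 * ‖P‖ ^ 2 / δ ^ 2 := by
    rw [div_pow, mul_pow, mul_pow, Real.sq_sqrt (by norm_num : (0:ℝ) ≤ 2)]
    ring
  have hrhs0 : 0 ≤ 2 * Real.sqrt 2 * ‖P‖ / δ := by positivity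
  have hsq : ‖ψA - ψB‖ ^ 2 ≤ (2 * Real.sqrt 2 * ‖P‖ / δ) ^ 2 := by
    rw [hrhs]; exact hfin2
  exact (abs_le_of_sq_le_sq' hsq hrhs0).2
end

section
/- Equivalence of network and graphon games: a vector (s¹,…,s^N) ∈ ℝ^{Nn} is a Nash equilibrium of the N-player network game with adjacency matrix P (where player i maximizes U(s^i, (1/N)Σ_j P_{ij}s^j) over S^i) if and only if the corresponding step function s(x) = s^i for x ∈ U_i is a Nash equilibrium of the graphon game with the step function graphon W(x,y) = P_{ij} for (x,y) ∈ U_i × U_j and strategy sets S(x) = S^i for x ∈ U_i. -/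
open MeasureTheory

/-- The `i`-th interval of the uniform partition of `[0,1]` into `N` pieces
(the last interval is closed at 1). -/
noncomputable def unifPart (N : ℕ) (i : Fin N) : Set ℝ :=
  Set.Ico (((i : ℕ) : ℝ) / N) ((((i : ℕ) : ℝ) + 1) / N) ∪
    (if (i : ℕ) + 1 = N then {(1 : ℝ)} else ∅)

/-- Every point of `[0,1)` lies in one of the half-open pieces. -/
lemma myIcoMem {N : ℕ} (hN : 0 < N) {y : ℝ} (hy : y ∈ Set.Ico (0:ℝ) 1) :
    ∃ k : Fin N, y ∈ Set.Ico (((k:ℕ):ℝ)/N) ((((k:ℕ):ℝ)+1)/N) := by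
  obtain ⟨hy0, hy1⟩ := hy
  have hNpos : (0:ℝ) < N := by exact_mod_cast hN
  have h0 : (0:ℝ) ≤ N * y := by positivity
  set k : ℕ := ⌊(N:ℝ) * y⌋.toNat with hk
  have hcast : ((k:ℤ):ℝ) = ((⌊(N:ℝ)*y⌋ : ℤ) : ℝ) := by
    rw [hk, Int.toNat_of_nonneg (Int.floor_nonneg.2 h0)]
  have hfle : ((k:ℕ):ℝ) ≤ (N:ℝ) * y := by
    have := Int.floor_le ((N:ℝ)*y)
    push_cast at hcast ⊢
    linarith [hcast ▸ this]
  have hlt : (N:ℝ) * y < (k:ℝ) + 1 := by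
    have := Int.lt_floor_add_one ((N:ℝ)*y)
    push_cast at hcast ⊢
    linarith
  have hkN : k < N := by
    by_contra h
    push_neg at h
    have : (N:ℝ) ≤ (k:ℝ) := by exact_mod_cast h
    have : (N:ℝ) * y < (N:ℝ) * 1 := by nlinarith
    nlinarith
  refine ⟨⟨k, hkN⟩, ?_, ?_⟩
  · rw [div_le_iff₀ hNpos]; linarith
  · rw [lt_div_iff₀ hNpos]; linarith

/-- Every point of `[0,1]` lies in some piece of the uniform partition. -/
lemma myMemPart {N : ℕ} (hN : 0 < N) {x : ℝ} (hx : x ∈ Set.Icc (0:ℝ) 1) :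
    ∃ i : Fin N, x ∈ unifPart N i := by
  rcases eq_or_lt_of_le hx.2 with h1|h1
  · refine ⟨⟨N-1, Nat.sub_lt hN one_pos⟩, Or.inr ?_⟩
    have : N - 1 + 1 = N := Nat.succ_pred_eq_of_pos hN
    rw [if_pos this]
    exact h1
  · obtain ⟨k, hk⟩ := myIcoMem hN ⟨hx.1, h1⟩
    exact ⟨k, Or.inl hk⟩

/-- The anchor `i/N` lies in the `i`-th piece and in `[0,1]`. -/
lemma myAnchor {N : ℕ} (hN : 0 < N) (i : Fin N) :
    ((i:ℕ):ℝ)/N ∈ unifPart N i ∧ ((i:ℕ):ℝ)/N ∈ Set.Icc (0:ℝ) 1 := by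
  have hNpos : (0:ℝ) < N := by exact_mod_cast hN
  have h1 : ((i:ℕ):ℝ) + 1 ≤ (N:ℝ) := by exact_mod_cast i.2
  refine ⟨Or.inl ⟨le_refl _, by gcongr; linarith⟩, by positivity, ?_⟩
  rw [div_le_one hNpos]; linarith

/-- The local aggregate of the step graphon at a point of `U_i` equals the
discrete aggregate of player `i`. -/
lemma key_integral {n N : ℕ} (hN : 0 < N)
    (P : Fin N → Fin N → ℝ) (s : Fin N → EuclideanSpace ℝ (Fin n))
    (W : ℝ → ℝ → ℝ) (sf : ℝ → EuclideanSpace ℝ (Fin n))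
    (hW : ∀ i j : Fin N, ∀ x ∈ unifPart N i, ∀ y ∈ unifPart N j, W x y = P i j)
    (hsf : ∀ i : Fin N, ∀ x ∈ unifPart N i, sf x = s i)
    (i : Fin N) (x : ℝ) (hx : x ∈ unifPart N i) :
    (∫ y in Set.Icc (0:ℝ) 1, W x y • sf y) = (N : ℝ)⁻¹ • ∑ j, P i j • s j := by
  have hNpos : (0:ℝ) < N := by exact_mod_cast hN
  set g : ℝ → EuclideanSpace ℝ (Fin n) := fun y =>
    ∑ j : Fin N, Set.indicator (Set.Ico (((j:ℕ):ℝ)/N) ((((j:ℕ):ℝ)+1)/N))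
      (fun _ => P i j • s j) y with hg
  have step1 : (∫ y in Set.Icc (0:ℝ) 1, W x y • sf y)
      = ∫ y in Set.Ico (0:ℝ) 1, W x y • sf y :=
    (setIntegral_congr_set Ico_ae_eq_Icc).symm
  have hfg : Set.EqOn (fun y => W x y • sf y) g (Set.Ico (0:ℝ) 1) := by
    intro y hy
    obtain ⟨k, hk⟩ := myIcoMem hN hy
    have hyk : y ∈ unifPart N k := Or.inl hk
    have hval : W x y • sf y = P i k • s k := by
      rw [hW i k x hx y hyk, hsf k y hyk]
    rw [hg]
    simp only
    rw [Finset.sum_eq_single k]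
    · rw [Set.indicator_of_mem hk, hval]
    · intro j _ hne
      apply Set.indicator_of_notMem
      intro hyj
      have hjk : (j:ℕ) ≠ (k:ℕ) := fun h => hne (Fin.ext h)
      rcases hjk.lt_or_gt with h|h
      · have h1 : ((j:ℕ):ℝ) + 1 ≤ ((k:ℕ):ℝ) := by exact_mod_cast h
        have h2 : (((j:ℕ):ℝ)+1)/N ≤ ((k:ℕ):ℝ)/N := by gcongr
        linarith [hyj.2, hk.1]
      · have h1 : ((k:ℕ):ℝ) + 1 ≤ ((j:ℕ):ℝ) := by exact_mod_cast h
        have h2 : (((k:ℕ):ℝ)+1)/N ≤ ((j:ℕ):ℝ)/N := by gcongr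
        linarith [hyj.1, hk.2]
    · intro h; exact absurd (Finset.mem_univ k) h
  rw [step1, setIntegral_congr_fun measurableSet_Ico hfg, hg]
  rw [integral_finset_sum]
  · have hterm : ∀ j : Fin N,
        (∫ y in Set.Ico (0:ℝ) 1, Set.indicator (Set.Ico (((j:ℕ):ℝ)/N) ((((j:ℕ):ℝ)+1)/N))
          (fun _ => P i j • s j) y) = (N:ℝ)⁻¹ • (P i j • s j) := by
      intro j
      have hsub : Set.Ico (((j:ℕ):ℝ)/N) ((((j:ℕ):ℝ)+1)/N) ⊆ Set.Ico (0:ℝ) 1 := by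
        intro y hy
        constructor
        · have : (0:ℝ) ≤ ((j:ℕ):ℝ)/N := by positivity
          linarith [hy.1]
        · have hj1 : ((j:ℕ):ℝ) + 1 ≤ (N:ℝ) := by exact_mod_cast j.2
          have : (((j:ℕ):ℝ)+1)/N ≤ 1 := by
            rw [div_le_one hNpos]; exact hj1
          linarith [hy.2]
      rw [setIntegral_indicator measurableSet_Ico, Set.inter_eq_right.2 hsub,
        setIntegral_const, measureReal_def, Real.volume_Ico]
      congr 1
      have hd : (((j:ℕ):ℝ)+1)/N - ((j:ℕ):ℝ)/N = 1/N := by field_simp; ring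
      rw [hd, ENNReal.toReal_ofReal (by positivity : (0:ℝ) ≤ 1/N), one_div]
    rw [Finset.sum_congr rfl (fun j _ => hterm j), ← Finset.smul_sum]
  · intro j _
    apply (integrable_indicator_iff measurableSet_Ico).2
    exact integrableOn_const
      (lt_of_le_of_lt (Measure.restrict_apply_le _ _) measure_Ico_lt_top).ne

/-- Equivalence of network and graphon games: `(s¹,…,s^N)` is a Nash equilibrium of
the `N`-player network game with adjacency matrix `P` (player `i` maximizes
`U(sⁱ, (1/N)Σⱼ P_{ij} sʲ)` over `Sᵢ`) iff the corresponding step function is a Nash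
equilibrium of the graphon game with the step graphon `W(x,y) = P_{ij}` on
`U_i × U_j` and strategy sets `S(x) = Sᵢ` on `U_i`. -/
theorem stmt_18 {n N : ℕ} (hN : 0 < N)
    (Upay : EuclideanSpace ℝ (Fin n) → EuclideanSpace ℝ (Fin n) → ℝ)
    (P : Fin N → Fin N → ℝ)
    (Sv : Fin N → Set (EuclideanSpace ℝ (Fin n)))
    (s : Fin N → EuclideanSpace ℝ (Fin n))
    (W : ℝ → ℝ → ℝ)
    (hW : ∀ i j : Fin N, ∀ x ∈ unifPart N i, ∀ y ∈ unifPart N j, W x y = P i j)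
    (Sf : ℝ → Set (EuclideanSpace ℝ (Fin n)))
    (hSf : ∀ i : Fin N, ∀ x ∈ unifPart N i, Sf x = Sv i)
    (sf : ℝ → EuclideanSpace ℝ (Fin n))
    (hsf : ∀ i : Fin N, ∀ x ∈ unifPart N i, sf x = s i) :
    (∀ i : Fin N, s i ∈ Sv i ∧ ∀ s' ∈ Sv i,
        Upay s' ((N : ℝ)⁻¹ • ∑ j, P i j • s j) ≤
          Upay (s i) ((N : ℝ)⁻¹ • ∑ j, P i j • s j)) ↔
    (∀ x ∈ Set.Icc (0:ℝ) 1, sf x ∈ Sf x ∧ ∀ s' ∈ Sf x,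
        Upay s' (∫ y in Set.Icc (0:ℝ) 1, W x y • sf y) ≤
          Upay (sf x) (∫ y in Set.Icc (0:ℝ) 1, W x y • sf y)) := by
  constructor
  · intro h x hx
    obtain ⟨i, hxi⟩ := myMemPart hN hx
    rw [hSf i x hxi, hsf i x hxi, key_integral hN P s W sf hW hsf i x hxi]
    exact h i
  · intro h i
    obtain ⟨hxi, hxIcc⟩ := myAnchor hN i
    have := h _ hxIcc
    rwa [hSf i _ hxi, hsf i _ hxi, key_integral hN P s W sf hW hsf i _ hxi] at this
end

section
/- Lipschitz continuity of the graphon equilibrium: suppose the graphon W is Lipschitz, |W(x₁,y) − W(x₂,y)| ≤ L|x₁ − x₂| for all y, the payoff U satisfies the strong concavity (constant α_U) and gradient Lipschitz (constant ℓ_U) assumptions, strategy sets are a common compact convex set S with max_{s∈S}‖s‖ = s_max, and (ℓ_U/α_U)λ_max(𝕎) < 1. Then the unique Nash equilibrium s̄ is Lipschitz continuous with constant L_s = (ℓ_U·L·s_max)/α_U: ‖s̄(x₁) − s̄(x₂)‖ ≤ L_s|x₁ − x₂|. -/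
open MeasureTheory

lemma max_growth {E : Type*} [NormedAddCommGroup E] [NormedSpace ℝ E]
    {f : E → ℝ} {α : ℝ} (hf : StrongConcaveOn Set.univ α f)
    {Sc : Set E} (hSconv : Convex ℝ Sc) {s₁ s₂ : E} (h₁ : s₁ ∈ Sc) (h₂ : s₂ ∈ Sc)
    (hmax : IsMaxOn f Sc s₁) :
    f s₂ + α / 2 * ‖s₁ - s₂‖ ^ 2 ≤ f s₁ := by
  set c : ℝ := ‖s₁ - s₂‖ ^ 2 with hc
  have hc0 : 0 ≤ c := by positivity
  have key : ∀ ε > 0, f s₂ + α / 2 * c ≤ f s₁ + ε := by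
    intro ε hε
    set t : ℝ := min (1/2) (ε / (|α| / 2 * c + 1)) with ht
    have hd : 0 < |α| / 2 * c + 1 := by positivity
    have ht0 : 0 < t := lt_min (by norm_num) (by positivity)
    have ht1 : t ≤ 1/2 := min_le_left _ _
    have hmem : (1 - t) • s₁ + t • s₂ ∈ Sc := hSconv h₁ h₂ (by linarith) ht0.le (by ring)
    have h1 := hf.2 (Set.mem_univ s₁) (Set.mem_univ s₂)
      (show (0:ℝ) ≤ 1 - t by linarith) ht0.le (show (1-t)+t = (1:ℝ) by ring)
    have h2 : f ((1 - t) • s₁ + t • s₂) ≤ f s₁ := hmax hmem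
    have h3 : t * (α / 2 * c) ≤ ε := by
      have h3a : t ≤ ε / (|α| / 2 * c + 1) := min_le_right _ _
      have h4 : t * (|α| / 2 * c + 1) ≤ ε := by
        rw [← le_div_iff₀ hd]; exact h3a
      have h5 : α / 2 * c ≤ |α| / 2 * c := by
        have := le_abs_self α; nlinarith
      nlinarith
    simp only [smul_eq_mul] at h1
    rw [← hc] at h1
    have h6 := h1.trans h2
    have h5 : t * (f s₂ + (1 - t) * (α / 2 * c)) ≤ t * f s₁ := by nlinarith [h6]
    have h4 : f s₂ + (1 - t) * (α / 2 * c) ≤ f s₁ := le_of_mul_le_mul_left h5 ht0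
    nlinarith [h3, h4]
  exact le_of_forall_pos_le_add key

lemma mean_value_gradient {F : Type*} [NormedAddCommGroup F] [InnerProductSpace ℝ F]
    [CompleteSpace F] {f g : F → ℝ} (hf : Differentiable ℝ f) (hg : Differentiable ℝ g) {C : ℝ}
    (hC : ∀ s, ‖gradient f s - gradient g s‖ ≤ C) (a b : F) :
    (f a - g a) - (f b - g b) ≤ C * ‖a - b‖ := by
  have hd : Differentiable ℝ (fun s => f s - g s) := hf.sub hg
  have hb : ∀ x ∈ (Set.univ : Set F), ‖fderiv ℝ (fun s => f s - g s) x‖ ≤ C := by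
    intro x _
    have h1 : fderiv ℝ (fun s => f s - g s) x = fderiv ℝ f x - fderiv ℝ g x :=
      fderiv_sub (hf x) (hg x)
    have h2 : ‖fderiv ℝ (fun s => f s - g s) x‖ = ‖gradient f x - gradient g x‖ := by
      rw [h1]
      have h3 : gradient f x - gradient g x =
          (InnerProductSpace.toDual ℝ F).symm (fderiv ℝ f x - fderiv ℝ g x) := by
        simp [gradient, map_sub]
      rw [h3, LinearIsometryEquiv.norm_map]
    rw [h2]; exact hC x
  have hmv := convex_univ.norm_image_sub_le_of_norm_fderiv_le (fun x _ => hd x) hb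
    (Set.mem_univ b) (Set.mem_univ a)
  calc (f a - g a) - (f b - g b) ≤ ‖(f a - g a) - (f b - g b)‖ := le_abs_self _
    _ ≤ C * ‖a - b‖ := hmv

/-- Lipschitz continuity of the graphon equilibrium: for an `L`-Lipschitz (in the
first argument) graphon `W`, a payoff `U` that is continuously differentiable,
`αU`-strongly concave in its own strategy with gradient `ℓU`-Lipschitz in the
aggregate, a common compact convex nonempty strategy set `Sc` bounded by `smax`,
and `(ℓU/αU)·λ_max(𝕎) < 1`, any Nash equilibrium `s̄` is Lipschitz with constant
`ℓU·L·smax/αU`. -/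
theorem stmt_19 {n : ℕ} (W : ℝ → ℝ → ℝ)
    (hmeas : Measurable (Function.uncurry W))
    (hsym : ∀ x y, W x y = W y x)
    (hbd : ∀ x ∈ Set.Icc (0:ℝ) 1, ∀ y ∈ Set.Icc (0:ℝ) 1, W x y ∈ Set.Icc (0:ℝ) 1)
    (L : ℝ)
    (hLip : ∀ y ∈ Set.Icc (0:ℝ) 1, ∀ x₁ ∈ Set.Icc (0:ℝ) 1, ∀ x₂ ∈ Set.Icc (0:ℝ) 1,
      |W x₁ y - W x₂ y| ≤ L * |x₁ - x₂|)
    (U : EuclideanSpace ℝ (Fin n) → EuclideanSpace ℝ (Fin n) → ℝ)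
    (αU ℓU : ℝ) (hα : 0 < αU) (hℓ : 0 ≤ ℓU)
    (hU : ContDiff ℝ 1 (Function.uncurry U))
    (hconc : ∀ z, StrongConcaveOn Set.univ αU (fun s => U s z))
    (hgrad : ∀ s z₁ z₂,
      ‖gradient (fun s' => U s' z₁) s - gradient (fun s' => U s' z₂) s‖ ≤ ℓU * ‖z₁ - z₂‖)
    (Sc : Set (EuclideanSpace ℝ (Fin n)))
    (hScomp : IsCompact Sc) (hSconv : Convex ℝ Sc) (hSne : Sc.Nonempty)
    (smax : ℝ) (hsmax : ∀ s' ∈ Sc, ‖s'‖ ≤ smax)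
    (lam : ℝ) (hlam : 0 ≤ lam)
    (hop : ∀ f : ℝ → ℝ, Measurable f →
      IntegrableOn (fun x => f x ^ 2) (Set.Icc (0:ℝ) 1) →
      ∫ x in Set.Icc (0:ℝ) 1, (∫ y in Set.Icc (0:ℝ) 1, W x y * f y) ^ 2 ≤
        lam ^ 2 * ∫ x in Set.Icc (0:ℝ) 1, f x ^ 2)
    (hcond : ℓU / αU * lam < 1)
    (sbar : ℝ → EuclideanSpace ℝ (Fin n))
    (hsmeas : AEStronglyMeasurable sbar ((volume : Measure ℝ).restrict (Set.Icc (0:ℝ) 1)))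
    (hNE : ∀ x ∈ Set.Icc (0:ℝ) 1, sbar x ∈ Sc ∧
      IsMaxOn (fun s' => U s' (∫ y in Set.Icc (0:ℝ) 1, W x y • sbar y)) Sc (sbar x)) :
    ∀ x₁ ∈ Set.Icc (0:ℝ) 1, ∀ x₂ ∈ Set.Icc (0:ℝ) 1,
      ‖sbar x₁ - sbar x₂‖ ≤ (ℓU * L * smax / αU) * |x₁ - x₂| := by
  intro x₁ hx₁ x₂ hx₂
  by_cases hxe : x₁ = x₂
  · simp [hxe]
  -- basic nonnegativity facts
  have habs : 0 < |x₁ - x₂| := abs_pos.2 (sub_ne_zero.2 hxe)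
  have hL0 : 0 ≤ L := by
    have h := hLip 0 (by norm_num) x₁ hx₁ x₂ hx₂
    nlinarith [abs_nonneg (W x₁ 0 - W x₂ 0)]
  obtain ⟨s₀, hs₀⟩ := hSne
  have hsm0 : 0 ≤ smax := (norm_nonneg s₀).trans (hsmax s₀ hs₀)
  -- integrability
  have hWm : ∀ x : ℝ, Measurable fun y => W x y :=
    fun x => hmeas.comp measurable_prodMk_left
  haveI : IsFiniteMeasure ((volume : Measure ℝ).restrict (Set.Icc (0:ℝ) 1)) := by
    constructor
    rw [Measure.restrict_apply_univ, Real.volume_Icc]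
    norm_num
  have hsbd : ∀ y ∈ Set.Icc (0:ℝ) 1, ‖sbar y‖ ≤ smax :=
    fun y hy => hsmax _ (hNE y hy).1
  have hint : ∀ x ∈ Set.Icc (0:ℝ) 1,
      IntegrableOn (fun y => W x y • sbar y) (Set.Icc (0:ℝ) 1) := by
    intro x hx
    have hsm : AEStronglyMeasurable (fun y => W x y • sbar y)
        ((volume : Measure ℝ).restrict (Set.Icc (0:ℝ) 1)) :=
      (hWm x).aestronglyMeasurable.smul hsmeas
    refine Integrable.mono' (integrable_const smax) hsm ?_
    rw [ae_restrict_iff' measurableSet_Icc]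
    refine ae_of_all _ fun y hy => ?_
    have hW := hbd x hx y hy
    have h1 : |W x y| ≤ 1 := abs_le.2 ⟨by linarith [hW.1], hW.2⟩
    calc ‖W x y • sbar y‖ = |W x y| * ‖sbar y‖ := by
          rw [norm_smul, Real.norm_eq_abs]
      _ ≤ 1 * smax := mul_le_mul h1 (hsbd y hy) (norm_nonneg _) one_pos.le
      _ = smax := one_mul _
  -- equilibrium data
  obtain ⟨hm₁, hmax₁⟩ := hNE x₁ hx₁
  obtain ⟨hm₂, hmax₂⟩ := hNE x₂ hx₂
  set z₁ : EuclideanSpace ℝ (Fin n) := ∫ y in Set.Icc (0:ℝ) 1, W x₁ y • sbar y with hz₁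
  set z₂ : EuclideanSpace ℝ (Fin n) := ∫ y in Set.Icc (0:ℝ) 1, W x₂ y • sbar y with hz₂
  -- bound on the aggregate difference
  have hzsub : z₁ - z₂ = ∫ y in Set.Icc (0:ℝ) 1, (W x₁ y - W x₂ y) • sbar y := by
    rw [hz₁, hz₂, ← integral_sub (hint x₁ hx₁) (hint x₂ hx₂)]
    congr 1
    funext y
    rw [sub_smul]
  have hznorm : ‖z₁ - z₂‖ ≤ L * smax * |x₁ - x₂| := by
    rw [hzsub]
    have hb : ∀ᵐ y ∂(volume : Measure ℝ), y ∈ Set.Icc (0:ℝ) 1 →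
        ‖(W x₁ y - W x₂ y) • sbar y‖ ≤ L * |x₁ - x₂| * smax := by
      refine ae_of_all _ fun y hy => ?_
      calc ‖(W x₁ y - W x₂ y) • sbar y‖ = |W x₁ y - W x₂ y| * ‖sbar y‖ := by
            rw [norm_smul, Real.norm_eq_abs]
        _ ≤ (L * |x₁ - x₂|) * smax :=
            mul_le_mul (hLip y hy x₁ hx₁ x₂ hx₂) (hsbd y hy) (norm_nonneg _)
              (by positivity)
    have h := norm_setIntegral_le_of_norm_le_const_ae'
      (μ := (volume : Measure ℝ)) (s := Set.Icc (0:ℝ) 1)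
      (f := fun y => (W x₁ y - W x₂ y) • sbar y)
      (by rw [Real.volume_Icc]; norm_num) hb
    rw [Real.volume_real_Icc] at h
    norm_num at h
    calc ‖∫ y in Set.Icc (0:ℝ) 1, (W x₁ y - W x₂ y) • sbar y‖
        ≤ L * |x₁ - x₂| * smax := h
      _ = L * smax * |x₁ - x₂| := by ring
  -- differentiability of U in its first argument
  have hUdiff : ∀ zz : EuclideanSpace ℝ (Fin n), Differentiable ℝ fun s => U s zz := by
    intro zz
    exact (hU.differentiable one_ne_zero).comp (differentiable_id.prodMk (differentiable_const zz))
  -- quadratic growth at the two maxima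
  have g1 := max_growth (hconc z₁) hSconv hm₁ hm₂ hmax₁
  have g2 := max_growth (hconc z₂) hSconv hm₂ hm₁ hmax₂
  -- mean value estimate
  have hmv := mean_value_gradient (hUdiff z₁) (hUdiff z₂)
    (fun s => hgrad s z₁ z₂) (sbar x₁) (sbar x₂)
  have hnsym : ‖sbar x₂ - sbar x₁‖ = ‖sbar x₁ - sbar x₂‖ := norm_sub_rev _ _
  rw [hnsym] at g2
  -- combine
  have hzz : ℓU * ‖z₁ - z₂‖ * ‖sbar x₁ - sbar x₂‖ ≤
      ℓU * (L * smax * |x₁ - x₂|) * ‖sbar x₁ - sbar x₂‖ := by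
    have := mul_le_mul_of_nonneg_left hznorm hℓ
    exact mul_le_mul_of_nonneg_right this (norm_nonneg _)
  have key : αU * ‖sbar x₁ - sbar x₂‖ ^ 2 ≤
      ℓU * (L * smax * |x₁ - x₂|) * ‖sbar x₁ - sbar x₂‖ := by
    nlinarith [g1, g2, hmv, hzz]
  rcases eq_or_lt_of_le (norm_nonneg (sbar x₁ - sbar x₂)) with h0 | h0
  · rw [← h0]; positivity
  · have h5 : αU * ‖sbar x₁ - sbar x₂‖ ≤ ℓU * L * smax * |x₁ - x₂| := by
      nlinarith [key, h0]
    rw [show (ℓU * L * smax / αU) * |x₁ - x₂| = (ℓU * L * smax * |x₁ - x₂|) / αU by ring,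
      le_div_iff₀ hα]
    linarith [h5]
end
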